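/- arXiv:1405.5551 — 5 statements merged into one kernel-verified Lean document; each statement's English description precedes it below -/
import Mathlib

section
/- Let A be a unital Banach algebra and J a closed right ideal with a left bounded approximate identity consisting of elements z with ‖1 − z‖ ≤ 1. If J is algebraically countably generated as a right A-module, then J = qA for an idempotent q with ‖1 − q‖ ≤ 1. -/
open Filter

set_option linter.unusedSectionVars false
set_option linter.unusedVariables false
set_option linter.unusedTactic false
set_option maxHeartbeats 1000000


section Aux
variable {A : Type*} [NormedRing A] [NormOneClass A] [CompleteSpace A]

omit [NormOneClass A] in
lemma aux_unit_of_norm (w : A) {r : ℝ} (hr : r < 1) (h : ‖1 - w‖ ≤ r) :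
    ∃ u : Aˣ, (u : A) = w := by
  refine ⟨Units.oneSub (1 - w) (lt_of_le_of_lt h hr), ?_⟩
  simp [Units.oneSub]

lemma aux_inv_norm (u : Aˣ) {r : ℝ} (hr : r < 1) (h : ‖1 - (u : A)‖ ≤ r) :
    ‖((u⁻¹ : Aˣ) : A)‖ ≤ (1 - r)⁻¹ := by
  have h0 : (0:ℝ) ≤ r := le_trans (norm_nonneg _) h
  have h1 : (0:ℝ) < 1 - r := by linarith
  have key : ((u⁻¹ : Aˣ) : A) = 1 + (1 - (u : A)) * ((u⁻¹ : Aˣ) : A) := by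
    rw [sub_mul, one_mul, u.mul_inv]; abel
  have hb : ‖((u⁻¹ : Aˣ) : A)‖ ≤ 1 + r * ‖((u⁻¹ : Aˣ) : A)‖ := by
    calc ‖((u⁻¹ : Aˣ) : A)‖ = ‖1 + (1 - (u : A)) * ((u⁻¹ : Aˣ) : A)‖ := by rw [← key]
    _ ≤ ‖(1:A)‖ + ‖(1 - (u : A)) * ((u⁻¹ : Aˣ) : A)‖ := norm_add_le _ _
    _ ≤ 1 + r * ‖((u⁻¹ : Aˣ) : A)‖ := by
        rw [norm_one]
        gcongr
        exact le_trans (norm_mul_le _ _) (by gcongr)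
  rw [show (1-r)⁻¹ = 1/(1-r) from (one_div _).symm, le_div_iff₀ h1]
  nlinarith [norm_nonneg ((u⁻¹ : Aˣ) : A)]
end Aux


section Aux2
set_option linter.unusedSectionVars false
set_option linter.unusedVariables false
variable {A : Type*} [NormedRing A] [NormedAlgebra ℂ A] [NormOneClass A] [CompleteSpace A]

lemma aux_mem_inv (J : Submodule ℂ A) (hJc : IsClosed (J : Set A))
    (hJr : ∀ x ∈ J, ∀ a : A, x * a ∈ J)
    (u : Aˣ) (h : ‖1 - (u : A)‖ < 1)
    (hmul : ∀ b ∈ J, (1 - (u : A)) * b ∈ J)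
    {y : A} (hy : y ∈ J) : ((u⁻¹ : Aˣ) : A) * y ∈ J := by
  set b : A := ((u⁻¹ : Aˣ) : A) * y with hbdef
  obtain ⟨g, hg0, hgs⟩ : ∃ g : ℕ → A, g 0 = 0 ∧ ∀ m, g (m+1) = y + (1 - (u:A)) * g m :=
    ⟨fun m => Nat.rec (0:A) (fun _ p => y + (1 - (u:A)) * p) m, rfl, fun _ => rfl⟩
  have hgJ : ∀ m, g m ∈ J := by
    intro m
    induction m with
    | zero => rw [hg0]; exact J.zero_mem
    | succ m ih => rw [hgs]; exact J.add_mem hy (hmul _ ih)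
  have hfix : b = y + (1 - (u:A)) * b := by
    rw [sub_mul, one_mul, hbdef, Units.mul_inv_cancel_left]; abel
  have hdiff : ∀ m, b - g m = (1 - (u:A)) ^ m * b := by
    intro m
    induction m with
    | zero => simp [hg0]
    | succ m ih =>
        have h2 : b - g (m+1) = (1 - (u:A)) * (b - g m) := by
          rw [hgs, mul_sub]
          nth_rewrite 1 [hfix]
          abel
        rw [h2, ih, pow_succ', mul_assoc]
  have htend : Tendsto g atTop (nhds b) := by
    rw [tendsto_iff_norm_sub_tendsto_zero]
    apply squeeze_zero (g := fun m => ‖1 - (u:A)‖ ^ m * ‖b‖) (fun m => norm_nonneg _)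
    · intro m
      rw [norm_sub_rev, hdiff]
      calc ‖(1 - (u:A)) ^ m * b‖ ≤ ‖(1 - (u:A)) ^ m‖ * ‖b‖ := norm_mul_le _ _
      _ ≤ ‖1 - (u:A)‖ ^ m * ‖b‖ := by gcongr; exact norm_pow_le _ m
    · have := tendsto_pow_atTop_nhds_zero_of_lt_one (norm_nonneg (1 - (u:A))) h
      simpa using this.mul_const ‖b‖
  exact hJc.mem_of_tendsto htend (Eventually.of_forall hgJ)
end Aux2


section P1
variable {A : Type*} [NormedRing A] [NormedAlgebra ℂ A] [NormOneClass A] [CompleteSpace A]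




lemma aux_cohen (J : Submodule ℂ A) (hJc : IsClosed (J : Set A))
    (hJr : ∀ x ∈ J, ∀ a : A, x * a ∈ J)
    {ι : Type*} [Nonempty ι] [SemilatticeSup ι]
    (e : ι → A) (heJ : ∀ t, e t ∈ J)
    (heF : ∀ t, ‖1 - e t‖ ≤ 1)
    (hlb : ∀ x ∈ J, Tendsto (fun t => e t * x) atTop (nhds x))
    (x : ℕ → A) (hxJ : ∀ k, x k ∈ J)
    (hgen : ∀ y ∈ J, ∃ (n : ℕ) (a : ℕ → A),
      y = ∑ k ∈ Finset.range n, x k * a k) :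
    ∃ z ∈ J, ‖1 - z‖ ≤ 1 ∧ (J : Set A) = {w : A | ∃ a : A, w = z * a} := by
  -- rescaled generators
  set γ : ℕ → ℂ := fun k => (((2⁻¹:ℝ)^k * (1 + ‖x k‖)⁻¹ : ℝ) : ℂ) with hγdef
  have hxpos : ∀ k, (0:ℝ) < 1 + ‖x k‖ := fun k => by positivity
  have hγpos : ∀ k, (0:ℝ) < (2⁻¹:ℝ)^k * (1 + ‖x k‖)⁻¹ := fun k => by positivity
  have hγnorm : ∀ k, ‖γ k‖ = (2⁻¹:ℝ)^k * (1 + ‖x k‖)⁻¹ := fun k => by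
    rw [hγdef, Complex.norm_real, Real.norm_eq_abs, abs_of_pos (hγpos k)]
  have hγne : ∀ k, γ k ≠ 0 := fun k => by
    simp only [hγdef]
    exact_mod_cast ne_of_gt (hγpos k)
  set Y : ℕ → A := fun k => γ k • x k with hYdef
  have hYJ : ∀ k, Y k ∈ J := fun k => J.smul_mem _ (hxJ k)
  have hYnorm : ∀ k, ‖Y k‖ ≤ (2⁻¹:ℝ)^k := by
    intro k
    rw [hYdef]
    calc ‖γ k • x k‖ = ‖γ k‖ * ‖x k‖ := norm_smul _ _
    _ = (2⁻¹:ℝ)^k * ((1 + ‖x k‖)⁻¹ * ‖x k‖) := by rw [hγnorm]; ring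
    _ ≤ (2⁻¹:ℝ)^k * 1 := by
        gcongr
        rw [← div_eq_inv_mul, div_le_one (hxpos k)]
        linarith [norm_nonneg (x k)]
    _ = (2⁻¹:ℝ)^k := mul_one _
  -- the choice function
  obtain ⟨pick, hpick⟩ : ∃ pick : ℕ → A → ι, ∀ n w,
      (∃ t : ι, ∀ k < 2*n+2, ‖(1 - e t) * (Ring.inverse w * Y k)‖ ≤ (2⁻¹:ℝ)^n) →
      ∀ k < 2*n+2, ‖(1 - e (pick n w)) * (Ring.inverse w * Y k)‖ ≤ (2⁻¹:ℝ)^n := by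
    classical
    refine ⟨fun n w => if h : (∃ t : ι, ∀ k < 2*n+2,
        ‖(1 - e t) * (Ring.inverse w * Y k)‖ ≤ (2⁻¹:ℝ)^n) then h.choose
        else Classical.arbitrary ι, fun n w h => ?_⟩
    dsimp only
    rw [dif_pos h]
    exact h.choose_spec
  -- scalars
  set σ : ℕ → ℂ := fun n => (((2⁻¹:ℝ)^n : ℝ) : ℂ) with hσdef
  have hσnorm : ∀ n, ‖σ n‖ = (2⁻¹:ℝ)^n := fun n => by
    rw [hσdef, Complex.norm_real, Real.norm_eq_abs, abs_of_pos (by positivity)]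
  have hσs : ∀ n, σ n = σ (n+1) + σ (n+1) := by
    intro n
    rw [hσdef]
    push_cast
    rw [pow_succ]
    push_cast
    ring
  -- the recursion
  obtain ⟨Z, hZ0, hZs⟩ : ∃ Z : ℕ → A, Z 0 = 1 ∧
      ∀ n, Z (n+1) = Z n - σ (n+1) • (1 - e (pick n (Z n))) :=
    ⟨fun n => Nat.rec (1:A) (fun m p => p - σ (m+1) • (1 - e (pick m p))) n, rfl, fun _ => rfl⟩
  -- main invariant
  have main : ∀ n, ‖1 - Z n‖ ≤ 1 - (2⁻¹:ℝ)^n ∧ (Z n - σ n • 1) ∈ J := by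
    intro n
    induction n with
    | zero =>
        constructor
        · rw [hZ0, sub_self, norm_zero]; norm_num
        · rw [hZ0]
          have : (1:A) - σ 0 • 1 = 0 := by
            have h0 : σ 0 = 1 := by rw [hσdef]; norm_num
            rw [h0, one_smul, sub_self]
          rw [this]; exact J.zero_mem
    | succ n ih =>
        have hid : (1:A) - Z (n+1) = (1 - Z n) + σ (n+1) • (1 - e (pick n (Z n))) := by
          rw [hZs n]; module
        constructor
        · rw [hid]
          calc ‖(1 - Z n) + σ (n+1) • (1 - e (pick n (Z n)))‖
              ≤ ‖1 - Z n‖ + ‖σ (n+1) • (1 - e (pick n (Z n)))‖ := norm_add_le _ _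
          _ ≤ (1 - (2⁻¹:ℝ)^n) + (2⁻¹:ℝ)^(n+1) * 1 := by
              refine add_le_add ih.1 ?_
              rw [norm_smul, hσnorm]
              exact mul_le_mul_of_nonneg_left (heF _) (by positivity)
          _ ≤ 1 - (2⁻¹:ℝ)^(n+1) := by
              rw [mul_one, pow_succ]
              nlinarith [pow_pos (by norm_num : (0:ℝ) < 2⁻¹) n]
        · have hid2 : Z (n+1) - σ (n+1) • (1:A)
              = (Z n - σ n • 1) + σ (n+1) • e (pick n (Z n)) := by
            rw [hZs n, hσs n]; module
          rw [hid2]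
          exact J.add_mem ih.2 (J.smul_mem _ (heJ _))
  -- units
  have hrlt : ∀ n : ℕ, 1 - (2⁻¹:ℝ)^n < 1 := fun n => by
    have := pow_pos (by norm_num : (0:ℝ) < 2⁻¹) n; linarith
  have hu : ∀ n, ∃ u : Aˣ, (u : A) = Z n := fun n =>
    aux_unit_of_norm (Z n) (hrlt n) (main n).1
  choose u hu using hu
  have hinvnorm : ∀ n, ‖Ring.inverse (Z n)‖ ≤ (2:ℝ)^n := by
    intro n
    rw [← hu n, Ring.inverse_unit]
    have := aux_inv_norm (u n) (hrlt n) (by rw [hu n]; exact (main n).1)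
    rw [sub_sub_cancel] at this
    calc ‖(((u n)⁻¹ : Aˣ) : A)‖ ≤ ((2⁻¹:ℝ)^n)⁻¹ := this
    _ = (2:ℝ)^n := by rw [← inv_pow, inv_inv]
  have hmulJ : ∀ n, ∀ b ∈ J, (1 - Z n) * b ∈ J := by
    intro n b hb
    have hid : (1:A) - Z n = (1 - σ n) • 1 - (Z n - σ n • 1) := by module
    rw [hid, sub_mul, smul_mul_assoc, one_mul]
    exact J.sub_mem (J.smul_mem _ hb) (hJr _ (main n).2 b)
  have hBJ : ∀ n k, Ring.inverse (Z n) * Y k ∈ J := by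
    intro n k
    rw [← hu n, Ring.inverse_unit]
    refine aux_mem_inv J hJc hJr (u n) ?_ ?_ (hYJ k)
    · rw [hu n]; exact lt_of_le_of_lt (main n).1 (hrlt n)
    · intro b hb; rw [hu n]; exact hmulJ n b hb
  -- choose good indices
  have hex : ∀ n, ∃ t : ι, ∀ k < 2*n+2,
      ‖(1 - e t) * (Ring.inverse (Z n) * Y k)‖ ≤ (2⁻¹:ℝ)^n := by
    intro n
    have hev : ∀ᶠ t in atTop, ∀ k ∈ Finset.range (2*n+2),
        ‖(1 - e t) * (Ring.inverse (Z n) * Y k)‖ ≤ (2⁻¹:ℝ)^n := by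
      rw [eventually_all_finset]
      intro k _
      have ht := hlb _ (hBJ n k)
      have hball := ht (Metric.closedBall_mem_nhds (Ring.inverse (Z n) * Y k)
        (by positivity : (0:ℝ) < (2⁻¹:ℝ)^n))
      filter_upwards [hball] with t htt
      have hneg : (1 - e t) * (Ring.inverse (Z n) * Y k)
          = -(e t * (Ring.inverse (Z n) * Y k) - Ring.inverse (Z n) * Y k) := by
        rw [sub_mul, one_mul]; abel
      rw [hneg, norm_neg, ← dist_eq_norm]
      exact Metric.mem_closedBall.mp htt
    obtain ⟨t, ht⟩ := hev.exists
    exact ⟨t, fun k hk => ht k (Finset.mem_range.mpr hk)⟩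
  have hgood : ∀ n, ∀ k < 2*n+2,
      ‖(1 - e (pick n (Z n))) * (Ring.inverse (Z n) * Y k)‖ ≤ (2⁻¹:ℝ)^n :=
    fun n => hpick n (Z n) (hex n)
  -- B and its Cauchy property
  set B : ℕ → ℕ → A := fun n k => Ring.inverse (Z n) * Y k with hBdef
  have hZB : ∀ n k, Z n * B n k = Y k := by
    intro n k
    rw [hBdef]
    dsimp only
    rw [← hu n, Ring.inverse_unit]
    exact (u n).mul_inv_cancel_left _
  have hBd : ∀ n k, ‖B (n+1) k - B n k‖ ≤ (2⁻¹:ℝ)^n := by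
    intro n k
    have hZdiff : Z n - Z (n+1) = σ (n+1) • (1 - e (pick n (Z n))) := by
      rw [hZs n]; abel
    have hid : B (n+1) k - B n k
        = σ (n+1) • (Ring.inverse (Z (n+1)) * ((1 - e (pick n (Z n))) * B n k)) := by
      have h1 : Ring.inverse (Z (n+1)) * ((Z n - Z (n+1)) * B n k)
          = B (n+1) k - B n k := by
        rw [sub_mul, mul_sub, hZB n k]
        congr 1
        rw [← hu (n+1), Ring.inverse_unit, ← mul_assoc]
        rw [Units.inv_mul, one_mul]
      rw [← h1, hZdiff, smul_mul_assoc, mul_smul_comm]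
    rw [hid, norm_smul, hσnorm]
    have hbound : ‖(1 - e (pick n (Z n))) * B n k‖ ≤ (2⁻¹:ℝ)^n := by
      rcases lt_or_ge k (2*n+2) with hk | hk
      · exact hgood n k hk
      · calc ‖(1 - e (pick n (Z n))) * B n k‖
            ≤ ‖1 - e (pick n (Z n))‖ * ‖B n k‖ := norm_mul_le _ _
        _ ≤ 1 * (‖Ring.inverse (Z n)‖ * ‖Y k‖) := by
            refine mul_le_mul (heF _) (norm_mul_le _ _) (norm_nonneg _) zero_le_one
        _ ≤ 1 * ((2:ℝ)^n * (2⁻¹:ℝ)^k) :=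
            mul_le_mul_of_nonneg_left
              (mul_le_mul (hinvnorm n) (hYnorm k) (norm_nonneg _) (by positivity))
              zero_le_one
        _ ≤ (2⁻¹:ℝ)^n := by
            rw [one_mul]
            have h2 : (2⁻¹:ℝ)^k ≤ (2⁻¹:ℝ)^(2*n+2) :=
              pow_le_pow_of_le_one (by norm_num) (by norm_num) hk
            have h3 : (2:ℝ)^n * (2⁻¹:ℝ)^(2*n+2) = (2⁻¹:ℝ)^(n+2) := by
              rw [show 2*n+2 = n + (n+2) from by ring, pow_add, ← mul_assoc,
                ← mul_pow]
              norm_num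
            calc (2:ℝ)^n * (2⁻¹:ℝ)^k ≤ (2:ℝ)^n * (2⁻¹:ℝ)^(2*n+2) := by
                  exact mul_le_mul_of_nonneg_left h2 (by positivity)
            _ = (2⁻¹:ℝ)^(n+2) := h3
            _ ≤ (2⁻¹:ℝ)^n :=
                pow_le_pow_of_le_one (by norm_num) (by norm_num) (by omega)
    calc (2⁻¹:ℝ)^(n+1) * ‖Ring.inverse (Z (n+1)) * ((1 - e (pick n (Z n))) * B n k)‖
        ≤ (2⁻¹:ℝ)^(n+1) * ((2:ℝ)^(n+1) * (2⁻¹:ℝ)^n) := by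
          refine mul_le_mul_of_nonneg_left ?_ (by positivity)
          calc ‖Ring.inverse (Z (n+1)) * ((1 - e (pick n (Z n))) * B n k)‖
              ≤ ‖Ring.inverse (Z (n+1))‖ * ‖(1 - e (pick n (Z n))) * B n k‖ :=
                norm_mul_le _ _
          _ ≤ (2:ℝ)^(n+1) * (2⁻¹:ℝ)^n :=
              mul_le_mul (hinvnorm (n+1)) hbound (norm_nonneg _) (by positivity)
    _ = (2⁻¹:ℝ)^n := by
        rw [← mul_assoc, ← mul_pow]
        norm_num
  -- limits
  have hbk : ∀ k, ∃ bk : A, Tendsto (fun n => B n k) atTop (nhds bk) := by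
    intro k
    apply cauchySeq_tendsto_of_complete
    apply cauchySeq_of_le_geometric 2⁻¹ 1 (by norm_num)
    intro n
    rw [dist_eq_norm, norm_sub_rev, one_mul]
    exact hBd n k
  choose b hb using hbk
  have hZc : ∃ z : A, Tendsto Z atTop (nhds z) := by
    apply cauchySeq_tendsto_of_complete
    apply cauchySeq_of_le_geometric 2⁻¹ 1 (by norm_num)
    intro n
    rw [dist_eq_norm, one_mul]
    have : Z n - Z (n+1) = σ (n+1) • (1 - e (pick n (Z n))) := by rw [hZs n]; abel
    rw [this, norm_smul, hσnorm]
    calc (2⁻¹:ℝ)^(n+1) * ‖1 - e (pick n (Z n))‖ ≤ (2⁻¹:ℝ)^(n+1) * 1 :=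
        mul_le_mul_of_nonneg_left (heF _) (by positivity)
    _ ≤ (2⁻¹:ℝ)^n := by rw [mul_one, pow_succ]; nlinarith [pow_pos (by norm_num : (0:ℝ) < 2⁻¹) n]
  obtain ⟨z, hz⟩ := hZc
  have hσ10 : Tendsto (fun n => σ n • (1:A)) atTop (nhds 0) := by
    rw [tendsto_zero_iff_norm_tendsto_zero]
    apply squeeze_zero (g := fun n => (2⁻¹:ℝ)^n) (fun n => norm_nonneg _)
    · intro n
      rw [norm_smul, hσnorm, norm_one, mul_one]
    · exact tendsto_pow_atTop_nhds_zero_of_lt_one (by norm_num) (by norm_num)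
  have hzJ : z ∈ J := by
    have ht : Tendsto (fun n => Z n - σ n • (1:A)) atTop (nhds (z - 0)) := hz.sub hσ10
    rw [sub_zero] at ht
    exact hJc.mem_of_tendsto ht (Eventually.of_forall (fun n => (main n).2))
  have hz1 : ‖1 - z‖ ≤ 1 := by
    refine le_of_tendsto (tendsto_const_nhds.sub hz).norm (Eventually.of_forall ?_)
    intro n
    refine le_trans (main n).1 ?_
    have := pow_pos (by norm_num : (0:ℝ) < 2⁻¹) n
    linarith
  have hfact : ∀ k, z * b k = Y k := by
    intro k
    have h2 : Tendsto (fun n => Z n * B n k) atTop (nhds (z * b k)) := hz.mul (hb k)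
    rw [show (fun n => Z n * B n k) = fun _ => Y k from funext (fun n => hZB n k)] at h2
    exact tendsto_nhds_unique h2 tendsto_const_nhds
  refine ⟨z, hzJ, hz1, ?_⟩
  ext w
  constructor
  · intro hw
    obtain ⟨m, a, ha⟩ := hgen w hw
    refine ⟨∑ k ∈ Finset.range m, (γ k)⁻¹ • (b k * a k), ?_⟩
    rw [ha, Finset.mul_sum]
    refine Finset.sum_congr rfl (fun k _ => ?_)
    rw [mul_smul_comm, ← mul_assoc, hfact k, hYdef]
    dsimp only
    rw [smul_mul_assoc, smul_smul, inv_mul_cancel₀ (hγne k), one_smul]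
  · rintro ⟨a, rfl⟩
    exact hJr z hzJ a
end P1


section P2
variable {A : Type*} [NormedRing A] [NormedAlgebra ℂ A] [NormOneClass A] [CompleteSpace A]


lemma aux_idem (J : Submodule ℂ A) (hJc : IsClosed (J : Set A))
    (hJr : ∀ x ∈ J, ∀ a : A, x * a ∈ J)
    (z : A) (hzJ : z ∈ J) (hz1 : ‖1 - z‖ ≤ 1)
    (hJz : (J : Set A) = {w : A | ∃ a : A, w = z * a}) :
    ∃ q : A, q * q = q ∧ ‖1 - q‖ ≤ 1 ∧
      (J : Set A) = {w : A | ∃ a : A, w = q * a} := by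
  haveI : CompleteSpace J := hJc.completeSpace_coe
  set L : A →L[ℂ] J := (ContinuousLinearMap.mul ℂ A z).codRestrict J (fun a => hJr z hzJ a)
    with hLdef
  have hLa : ∀ a : A, (L a : A) = z * a := fun a => rfl
  have hsurj : Function.Surjective L := by
    rintro ⟨w, hw⟩
    have hw' : w ∈ {w : A | ∃ a : A, w = z * a} := hJz ▸ hw
    obtain ⟨a, ha⟩ := hw'
    exact ⟨a, Subtype.ext (by rw [hLa]; exact ha.symm)⟩
  obtain ⟨C, hC0, hC⟩ := L.exists_preimage_norm_le hsurj
  set τ : ℕ → ℝ := fun n => (2⁻¹ : ℝ) ^ n with hτdef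
  have hτpos : ∀ n, 0 < τ n := fun n => by positivity
  set σ : ℕ → ℂ := fun n => ((τ n : ℝ) : ℂ) with hσdef
  have hσnorm : ∀ n, ‖σ n‖ = τ n := fun n => by
    rw [hσdef]; simp [Complex.norm_real, abs_of_pos (hτpos n)]
  -- build units
  have key : ∀ n, ∃ U : Aˣ, (U : A) = z + σ n • 1 ∧ ‖((U⁻¹ : Aˣ) : A)‖ ≤ (τ n)⁻¹ := by
    intro n
    have hτn := hτpos n
    set c : ℂ := 1 + σ n with hcdef
    have hcr : c = ((1 + τ n : ℝ) : ℂ) := by rw [hcdef, hσdef]; push_cast; ring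
    have hc0 : c ≠ 0 := by
      rw [hcr]
      exact_mod_cast ne_of_gt (by positivity : (0:ℝ) < 1 + τ n)
    have hcinv : ‖c⁻¹‖ = (1 + τ n)⁻¹ := by
      rw [hcr, norm_inv, Complex.norm_real, Real.norm_eq_abs, abs_of_pos (by positivity)]
    have hlt : ‖c⁻¹ • (1 - z)‖ < 1 := by
      calc ‖c⁻¹ • (1 - z)‖ ≤ ‖c⁻¹‖ * ‖1 - z‖ := by rw [norm_smul]
      _ ≤ (1 + τ n)⁻¹ * 1 := by rw [hcinv]; gcongr
      _ < 1 := by rw [mul_one]; apply inv_lt_one_of_one_lt₀; linarith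
    set w : Aˣ := Units.oneSub (c⁻¹ • (1 - z)) hlt with hwdef
    have hwval : (w : A) = 1 - c⁻¹ • (1 - z) := rfl
    have hval : c • (w : A) = z + σ n • 1 := by
      rw [hwval, smul_sub, smul_smul, mul_inv_cancel₀ hc0, one_smul, hcdef]
      module
    have hmulinv : (z + σ n • 1) * (c⁻¹ • ((w⁻¹ : Aˣ) : A)) = 1 := by
      rw [← hval, smul_mul_smul_comm, mul_inv_cancel₀ hc0, w.mul_inv, one_smul]
    have hinvmul : (c⁻¹ • ((w⁻¹ : Aˣ) : A)) * (z + σ n • 1) = 1 := by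
      rw [← hval, smul_mul_smul_comm, inv_mul_cancel₀ hc0, w.inv_mul, one_smul]
    refine ⟨⟨z + σ n • 1, c⁻¹ • ((w⁻¹ : Aˣ) : A), hmulinv, hinvmul⟩, rfl, ?_⟩
    have hwinv : ‖((w⁻¹ : Aˣ) : A)‖ ≤ (1 - (1 + τ n)⁻¹)⁻¹ := by
      apply aux_inv_norm w (r := (1 + τ n)⁻¹)
      · apply inv_lt_one_of_one_lt₀; linarith
      · rw [hwval, sub_sub_cancel]
        calc ‖c⁻¹ • (1 - z)‖ ≤ ‖c⁻¹‖ * ‖1 - z‖ := by rw [norm_smul]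
        _ ≤ (1 + τ n)⁻¹ * 1 := by rw [hcinv]; gcongr
        _ = (1 + τ n)⁻¹ := mul_one _
    show ‖c⁻¹ • ((w⁻¹ : Aˣ) : A)‖ ≤ (τ n)⁻¹
    calc ‖c⁻¹ • ((w⁻¹ : Aˣ) : A)‖ ≤ ‖c⁻¹‖ * ‖((w⁻¹ : Aˣ) : A)‖ := by rw [norm_smul]
    _ ≤ (1 + τ n)⁻¹ * (1 - (1 + τ n)⁻¹)⁻¹ := by rw [hcinv]; gcongr
    _ = (τ n)⁻¹ := by field_simp; rw [add_sub_cancel_left, div_self (hτpos n).ne']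
  choose U hU1 hU2 using key
  set q : ℕ → A := fun n => z * (((U n)⁻¹ : Aˣ) : A) with hqdef
  have hcomm : ∀ n, Commute z ((((U n)⁻¹ : Aˣ)) : A) := by
    intro n
    have h1 : Commute z ((U n : Aˣ) : A) := by
      rw [hU1]
      exact (Commute.refl z).add_right ((Commute.one_right z).smul_right (σ n))
    exact h1.units_inv_right
  have h1q : ∀ n, 1 - q n = σ n • (((U n)⁻¹ : Aˣ) : A) := by
    intro n
    rw [hqdef]
    nth_rewrite 1 [← (U n).mul_inv]
    rw [hU1, add_mul, smul_mul_assoc, one_mul]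
    abel
  have hn1q : ∀ n, ‖1 - q n‖ ≤ 1 := by
    intro n
    rw [h1q, norm_smul, hσnorm]
    calc τ n * ‖(((U n)⁻¹ : Aˣ) : A)‖ ≤ τ n * (τ n)⁻¹ :=
        mul_le_mul_of_nonneg_left (hU2 n) (hτpos n).le
    _ = 1 := mul_inv_cancel₀ (hτpos n).ne'
  have hqb : ∀ n, ‖q n‖ ≤ 2 := by
    intro n
    have : q n = 1 - (1 - q n) := by abel
    rw [this]
    calc ‖1 - (1 - q n)‖ ≤ ‖(1:A)‖ + ‖1 - q n‖ := norm_sub_le _ _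
    _ ≤ 1 + 1 := by rw [norm_one]; gcongr; exact hn1q n
    _ = 2 := by norm_num
  have hqJ : ∀ n, q n ∈ J := fun n => hJr z hzJ _
  have hkey : ∀ n (a : A), ‖(1 - q n) * (z * a)‖ ≤ τ n * (2 * ‖a‖) := by
    intro n a
    have hid : (1 - q n) * (z * a) = σ n • (q n * a) := by
      rw [h1q, smul_mul_assoc, ← mul_assoc, ← (hcomm n).eq, hqdef]
    rw [hid, norm_smul, hσnorm]
    refine mul_le_mul_of_nonneg_left ?_ (hτpos n).le
    calc ‖q n * a‖ ≤ ‖q n‖ * ‖a‖ := norm_mul_le _ _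
    _ ≤ 2 * ‖a‖ := mul_le_mul_of_nonneg_right (hqb n) (norm_nonneg a)
  have hch : ∀ n, ∃ a : A, L a = (⟨q n, hqJ n⟩ : J) ∧ ‖a‖ ≤ C * ‖(⟨q n, hqJ n⟩ : J)‖ :=
    fun n => hC _
  choose av hav1 hav2 using hch
  have hzav : ∀ n, z * av n = q n := by
    intro n
    have := congrArg (Subtype.val) (hav1 n)
    rw [← hLa]; exact this
  have havb : ∀ n, ‖av n‖ ≤ C * 2 := by
    intro n
    refine le_trans (hav2 n) ?_
    gcongr
    show ‖(⟨q n, hqJ n⟩ : J)‖ ≤ 2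
    rw [show ‖(⟨q n, hqJ n⟩ : J)‖ = ‖q n‖ from rfl]
    exact hqb n
  have hij : ∀ n m, Commute (q n) (q m) := by
    intro n m
    have cz1 : ∀ s : ℂ, Commute z (s • (1:A)) := fun s => (Commute.one_right z).smul_right s
    have hUU : Commute ((((U n)⁻¹ : Aˣ)) : A) ((((U m)⁻¹ : Aˣ)) : A) := by
      have : Commute ((U n : Aˣ) : A) ((U m : Aˣ) : A) := by
        rw [hU1, hU1]
        refine Commute.add_left ?_ ?_
        · exact (Commute.refl z).add_right (cz1 (σ m))
        · exact ((cz1 (σ n)).symm).add_right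
            (((Commute.refl (1:A)).smul_left (σ n)).smul_right (σ m))
      exact this.units_inv_left.units_inv_right
    have c1 : Commute z (q m) := (Commute.refl z).mul_right (hcomm m)
    have c2 : Commute ((((U n)⁻¹ : Aˣ)) : A) (q m) :=
      Commute.mul_right (hcomm n).symm hUU
    exact c1.mul_left c2
  have hdiffid : ∀ n m, q n - q m = (1 - q m) * q n - (1 - q n) * q m := by
    intro n m
    rw [sub_mul, sub_mul, one_mul, one_mul, (hij n m).eq]
    abel
  have hdist : ∀ n m, ‖q n - q m‖ ≤ 4 * C * (τ m + τ n) := by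
    intro n m
    rw [hdiffid]
    have e1 : ‖(1 - q m) * q n‖ ≤ 4 * C * τ m := by
      rw [← hzav n]
      calc ‖(1 - q m) * (z * av n)‖ ≤ τ m * (2 * ‖av n‖) := hkey m (av n)
      _ ≤ τ m * (2 * (C * 2)) := mul_le_mul_of_nonneg_left
          (mul_le_mul_of_nonneg_left (havb n) (by norm_num)) (hτpos m).le
      _ = 4 * C * τ m := by ring
    have e2 : ‖(1 - q n) * q m‖ ≤ 4 * C * τ n := by
      rw [← hzav m]
      calc ‖(1 - q n) * (z * av m)‖ ≤ τ n * (2 * ‖av m‖) := hkey n (av m)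
      _ ≤ τ n * (2 * (C * 2)) := mul_le_mul_of_nonneg_left
          (mul_le_mul_of_nonneg_left (havb m) (by norm_num)) (hτpos n).le
      _ = 4 * C * τ n := by ring
    calc ‖(1 - q m) * q n - (1 - q n) * q m‖ ≤ ‖(1 - q m) * q n‖ + ‖(1 - q n) * q m‖ :=
        norm_sub_le _ _
    _ ≤ 4 * C * τ m + 4 * C * τ n := add_le_add e1 e2
    _ = 4 * C * (τ m + τ n) := by ring
  have hτanti : ∀ {N n : ℕ}, N ≤ n → τ n ≤ τ N := by
    intro N n h
    exact pow_le_pow_of_le_one (by norm_num) (by norm_num) h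
  have hcauchy : CauchySeq q := by
    apply cauchySeq_of_le_tendsto_0 (fun N => 8 * C * τ N)
    · intro n m N hn hm
      rw [dist_eq_norm]
      calc ‖q n - q m‖ ≤ 4 * C * (τ m + τ n) := hdist n m
      _ ≤ 4 * C * (τ N + τ N) := by gcongr <;> [exact hτanti hm; exact hτanti hn]
      _ = 8 * C * τ N := by ring
    · have h8 : Tendsto (fun N => 8 * C * τ N) atTop (nhds (8 * C * 0)) :=
        (tendsto_pow_atTop_nhds_zero_of_lt_one (by norm_num) (by norm_num) :
          Tendsto τ atTop (nhds 0)).const_mul (8 * C)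
      rw [mul_zero] at h8
      exact h8
  obtain ⟨qq, hq⟩ := cauchySeq_tendsto_of_complete hcauchy
  have hqmemJ : qq ∈ J := hJc.mem_of_tendsto hq (Eventually.of_forall hqJ)
  have hq1 : ‖1 - qq‖ ≤ 1 := by
    have ht : Tendsto (fun n => (1 : A) - q n) atTop (nhds (1 - qq)) :=
      tendsto_const_nhds.sub hq
    exact le_of_tendsto ht.norm (Eventually.of_forall hn1q)
  have hτ0 : Tendsto τ atTop (nhds 0) :=
    tendsto_pow_atTop_nhds_zero_of_lt_one (by norm_num) (by norm_num)
  have hqq : qq * qq = qq := by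
    have h2 : Tendsto (fun n => q n * q n - q n) atTop (nhds (qq * qq - qq)) :=
      (hq.mul hq).sub hq
    have h3 : Tendsto (fun n => q n * q n - q n) atTop (nhds 0) := by
      rw [tendsto_zero_iff_norm_tendsto_zero]
      apply squeeze_zero (g := fun n => 4 * C * τ n) (fun n => norm_nonneg _)
      · intro n
        have hneg : q n * q n - q n = -((1 - q n) * q n) := by
          rw [sub_mul, one_mul]; abel
        rw [hneg, norm_neg]
        calc ‖(1 - q n) * q n‖ = ‖(1 - q n) * (z * av n)‖ := by rw [hzav n]
        _ ≤ τ n * (2 * ‖av n‖) := hkey n (av n)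
        _ ≤ τ n * (2 * (C * 2)) := mul_le_mul_of_nonneg_left
            (mul_le_mul_of_nonneg_left (havb n) (by norm_num)) (hτpos n).le
        _ = 4 * C * τ n := by ring
      · have h4 : Tendsto (fun n => 4 * C * τ n) atTop (nhds (4 * C * 0)) :=
          hτ0.const_mul (4 * C)
        rw [mul_zero] at h4
        exact h4
    have := tendsto_nhds_unique h2 h3
    exact sub_eq_zero.mp this
  refine ⟨qq, hqq, hq1, ?_⟩
  ext w
  constructor
  · intro hw
    obtain ⟨a, ha⟩ : ∃ a : A, w = z * a := by
      have := hw
      rw [show (J : Set A) = _ from hJz] at this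
      exact this
    have hqw : Tendsto (fun n => q n * w) atTop (nhds (qq * w)) := hq.mul tendsto_const_nhds
    have hqw2 : Tendsto (fun n => q n * w - w) atTop (nhds 0) := by
      rw [tendsto_zero_iff_norm_tendsto_zero]
      apply squeeze_zero (g := fun n => τ n * (2 * ‖a‖)) (fun n => norm_nonneg _)
      · intro n
        have hneg : q n * w - w = -((1 - q n) * w) := by
          rw [sub_mul, one_mul]; abel
        rw [hneg, norm_neg, ha]
        exact hkey n a
      · have h5 : Tendsto (fun n => τ n * (2 * ‖a‖)) atTop (nhds (0 * (2 * ‖a‖))) :=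
          hτ0.mul_const (2 * ‖a‖)
        rw [zero_mul] at h5
        exact h5
    have : Tendsto (fun n => q n * w - w) atTop (nhds (qq * w - w)) :=
      hqw.sub tendsto_const_nhds
    have hqww : qq * w - w = 0 := tendsto_nhds_unique this hqw2
    exact ⟨w, by rw [eq_comm, ← sub_eq_zero]; exact hqww⟩
  · rintro ⟨a, rfl⟩
    exact hJr qq hqmemJ a
end P2


/-- Let `A` be a unital Banach algebra and `J` a closed right ideal with
a left bounded approximate identity consisting of elements `z` with `‖1 − z‖ ≤ 1`.  If `J`
is algebraically countably generated as a right `A`-module, then `J = qA` for an idempotent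
`q` with `‖1 − q‖ ≤ 1`. -/
theorem countably_generated_ideal_eq_idempotent_ideal
    {A : Type*} [NormedRing A] [NormedAlgebra ℂ A] [NormOneClass A] [CompleteSpace A]
    (J : Submodule ℂ A) (hJc : IsClosed (J : Set A))
    (hJr : ∀ x ∈ J, ∀ a : A, x * a ∈ J)
    {ι : Type*} [Nonempty ι] [SemilatticeSup ι]
    (e : ι → A) (heJ : ∀ t, e t ∈ J) (hbd : ∃ C : ℝ, ∀ t, ‖e t‖ ≤ C)
    (heF : ∀ t, ‖1 - e t‖ ≤ 1)
    (hlb : ∀ x ∈ J, Tendsto (fun t => e t * x) atTop (nhds x))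
    (x : ℕ → A) (hxJ : ∀ k, x k ∈ J)
    (hgen : ∀ y ∈ J, ∃ (n : ℕ) (a : ℕ → A),
      y = ∑ k ∈ Finset.range n, x k * a k) :
    ∃ q : A, q * q = q ∧ ‖1 - q‖ ≤ 1 ∧
      (J : Set A) = {w : A | ∃ a : A, w = q * a} := by
  obtain ⟨z, hzJ, hz1, hJz⟩ := aux_cohen J hJc hJr e heJ heF hlb x hxJ hgen
  exact aux_idem J hJc hJr z hzJ hz1 hJz
end

section
/- Let A be a unital Banach algebra and x ∈ A accretive. The following are equivalent: (i) xA is norm closed; (ii) Ax is norm closed; (iii) x is pseudo-invertible in A (there is y ∈ A with xyx = x); (iv) x is invertible in the closed subalgebra generated by x. Moreover these imply 0 is isolated in or absent from the spectrum of x. -/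
open Polynomial Filter Topology

set_option linter.unusedSectionVars false
set_option maxHeartbeats 1000000

namespace Acc15

variable {A : Type*} [NormedRing A] [NormedAlgebra ℂ A] [NormOneClass A] [CompleteSpace A]

variable (x : A)

/-- The closed unital subalgebra generated by `x`. -/
noncomputable def Dalg : Subalgebra ℂ A := (Algebra.adjoin ℂ {x}).topologicalClosure

/-- The closed non-unital subalgebra generated by `x` (as a set). -/
def Bset : Set A := closure ((NonUnitalAlgebra.adjoin ℂ {x} : NonUnitalSubalgebra ℂ A) : Set A)

lemma Dalg_coe : (Dalg x : Set A) = closure ((Algebra.adjoin ℂ {x} : Subalgebra ℂ A) : Set A) :=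
  Subalgebra.topologicalClosure_coe _

lemma isClosed_Dalg : IsClosed (Dalg x : Set A) := by
  rw [Dalg_coe]; exact isClosed_closure

lemma x_mem_Dalg : x ∈ Dalg x :=
  (Algebra.adjoin ℂ {x}).le_topologicalClosure (Algebra.subset_adjoin rfl)

lemma isClosed_Bset : IsClosed (Bset x) := isClosed_closure

lemma x_mem_Bset : x ∈ Bset x :=
  subset_closure (NonUnitalAlgebra.subset_adjoin ℂ rfl)

lemma zero_mem_Bset : (0 : A) ∈ Bset x := subset_closure (zero_mem _)

lemma comm_adjoin : ∀ a ∈ Algebra.adjoin ℂ {x}, ∀ b ∈ Algebra.adjoin ℂ {x}, a * b = b * a := by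
  intro a ha b hb
  rw [Algebra.adjoin_singleton_eq_range_aeval] at ha hb
  obtain ⟨p, rfl⟩ := ha
  obtain ⟨q, rfl⟩ := hb
  rw [← map_mul, ← map_mul, mul_comm]

lemma comm_Dalg : ∀ a ∈ Dalg x, ∀ b ∈ Dalg x, a * b = b * a := by
  have h1 : ∀ a ∈ Algebra.adjoin ℂ {x}, ∀ b ∈ Dalg x, a * b = b * a := by
    intro a ha b hb
    rw [← SetLike.mem_coe, Dalg_coe] at hb
    refine closure_minimal (fun c hc => comm_adjoin x a ha c hc)
      (isClosed_eq (continuous_mul_left a) (continuous_mul_right a)) hb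
  intro a ha b hb
  rw [← SetLike.mem_coe, Dalg_coe] at ha
  refine closure_minimal (fun c hc => ?_) (isClosed_eq (continuous_mul_right b)
    (continuous_mul_left b)) ha
  exact h1 c hc b hb

lemma xpow_mem_adjoinNU : ∀ n : ℕ, x ^ (n + 1) ∈ NonUnitalAlgebra.adjoin ℂ ({x} : Set A) := by
  have hx : x ∈ NonUnitalAlgebra.adjoin ℂ ({x} : Set A) := NonUnitalAlgebra.subset_adjoin ℂ rfl
  intro n
  induction n with
  | zero => rw [pow_one]; exact hx
  | succ n ih =>
      rw [pow_succ]
      exact mul_mem ih hx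

lemma adjoinU_mul_adjoinNU : ∀ p : ℂ[X], ∀ b ∈ NonUnitalAlgebra.adjoin ℂ ({x} : Set A),
    aeval x p * b ∈ NonUnitalAlgebra.adjoin ℂ ({x} : Set A) ∧
    b * aeval x p ∈ NonUnitalAlgebra.adjoin ℂ ({x} : Set A) := by
  intro p
  induction p using Polynomial.induction_on' with
  | add p q hp hq =>
      intro b hb
      rw [map_add, add_mul, mul_add]
      exact ⟨add_mem (hp b hb).1 (hq b hb).1, add_mem (hp b hb).2 (hq b hb).2⟩
  | monomial n c =>
      intro b hb
      rw [aeval_monomial]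
      have hc : (algebraMap ℂ A) c = c • (1 : A) := by
        rw [Algebra.algebraMap_eq_smul_one]
      cases n with
      | zero =>
          simp only [pow_zero, mul_one, hc]
          rw [smul_mul_assoc, one_mul, mul_smul_comm, mul_one]
          exact ⟨SMulMemClass.smul_mem c hb, SMulMemClass.smul_mem c hb⟩
      | succ n =>
          have hx := xpow_mem_adjoinNU x n
          rw [hc, smul_mul_assoc, one_mul, smul_mul_assoc, mul_smul_comm]
          exact ⟨SMulMemClass.smul_mem c (mul_mem hx hb), SMulMemClass.smul_mem c (mul_mem hb hx)⟩

lemma mul_mem_Bset_of_Dalg : ∀ d ∈ Dalg x, ∀ b ∈ Bset x, d * b ∈ Bset x ∧ b * d ∈ Bset x := by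
  have h0 : ∀ d ∈ Algebra.adjoin ℂ {x}, ∀ b ∈ NonUnitalAlgebra.adjoin ℂ ({x} : Set A),
      d * b ∈ Bset x ∧ b * d ∈ Bset x := by
    intro d hd b hb
    rw [Algebra.adjoin_singleton_eq_range_aeval] at hd
    obtain ⟨p, rfl⟩ := hd
    obtain ⟨h1, h2⟩ := adjoinU_mul_adjoinNU x p b hb
    exact ⟨subset_closure h1, subset_closure h2⟩
  have h1 : ∀ d ∈ Algebra.adjoin ℂ {x}, ∀ b ∈ Bset x, d * b ∈ Bset x ∧ b * d ∈ Bset x := by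
    intro d hd b hb
    have : closure ((NonUnitalAlgebra.adjoin ℂ {x} : NonUnitalSubalgebra ℂ A) : Set A) ⊆
        {b | d * b ∈ Bset x ∧ b * d ∈ Bset x} := by
      refine closure_minimal (fun c hc => h0 d hd c hc) (IsClosed.inter ?_ ?_)
      · exact (isClosed_Bset x).preimage (continuous_mul_left d)
      · exact (isClosed_Bset x).preimage (continuous_mul_right d)
    exact this hb
  intro d hd b hb
  rw [← SetLike.mem_coe, Dalg_coe] at hd
  have : closure ((Algebra.adjoin ℂ {x} : Subalgebra ℂ A) : Set A) ⊆
      {d | d * b ∈ Bset x ∧ b * d ∈ Bset x} := by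
    refine closure_minimal (fun c hc => h1 c hc b hb) (IsClosed.inter ?_ ?_)
    · exact (isClosed_Bset x).preimage (continuous_mul_right b)
    · exact (isClosed_Bset x).preimage (continuous_mul_left b)
  exact this hd

lemma Bset_subset_Dalg : Bset x ⊆ (Dalg x : Set A) := by
  have : ((NonUnitalAlgebra.adjoin ℂ {x} : NonUnitalSubalgebra ℂ A) : Set A) ⊆ (Dalg x : Set A) := by
    have hle : NonUnitalAlgebra.adjoin ℂ ({x} : Set A) ≤ (Dalg x).toNonUnitalSubalgebra :=
      NonUnitalAlgebra.adjoin_le (by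
        intro a ha
        rw [Set.mem_singleton_iff] at ha
        subst ha
        exact x_mem_Dalg a)
    exact fun a ha => hle ha
  calc Bset x ⊆ closure (Dalg x : Set A) := closure_mono this
  _ = (Dalg x : Set A) := (isClosed_Dalg x).closure_eq

lemma tsum_mem_Dalg (f : ℕ → A) (hf : ∀ n, f n ∈ Dalg x) (hs : Summable f) :
    (∑' n, f n) ∈ Dalg x := by
  rw [← SetLike.mem_coe]
  refine (isClosed_Dalg x).mem_of_tendsto hs.hasSum.tendsto_sum_nat
    (Eventually.of_forall fun n => ?_)
  exact sum_mem (fun i _ => hf i)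

/-- If `u * x = x` then `u` acts as a left identity on `Bset x`. -/
lemma leftid_Bset (u : A) (h : u * x = x) : ∀ b ∈ Bset x, u * b = b := by
  intro b hb
  have h0 : ∀ c ∈ NonUnitalAlgebra.adjoin ℂ ({x} : Set A), u * c = c := by
    intro c hc
    induction hc using NonUnitalAlgebra.adjoin_induction with
    | mem y hy => rw [Set.mem_singleton_iff] at hy; subst hy; exact h
    | add a b _ _ ha hb => rw [mul_add, ha, hb]
    | zero => rw [mul_zero]
    | mul a b _ _ ha _ => rw [← mul_assoc, ha]
    | smul r a _ ha => rw [mul_smul_comm, ha]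
  exact closure_minimal h0
    (isClosed_eq (continuous_mul_left u) continuous_id) hb

lemma rightid_Bset (u : A) (h : x * u = x) : ∀ b ∈ Bset x, b * u = b := by
  intro b hb
  have h0 : ∀ c ∈ NonUnitalAlgebra.adjoin ℂ ({x} : Set A), c * u = c := by
    intro c hc
    induction hc using NonUnitalAlgebra.adjoin_induction with
    | mem y hy => rw [Set.mem_singleton_iff] at hy; subst hy; exact h
    | add a b _ _ ha hb => rw [add_mul, ha, hb]
    | zero => rw [zero_mul]
    | mul a b _ _ _ hb => rw [mul_assoc, hb]
    | smul r a _ ha => rw [smul_mul_assoc, ha]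
  exact closure_minimal h0
    (isClosed_eq (continuous_mul_right u) continuous_id) hb

section WithAcc

variable (hacc : ∀ φ : StrongDual ℂ A, ‖φ‖ = 1 → φ 1 = 1 → 0 ≤ (φ x).re)

include hacc

omit hacc in
lemma one_ne_zero' : (1 : A) ≠ 0 := by
  intro h
  have h1 : ‖(1 : A)‖ = 1 := norm_one
  rw [h, norm_zero] at h1
  norm_num at h1

lemma re_nonneg_of_attain (w : A) (hw : w ≠ 0) (ψ : StrongDual ℂ A)
    (hψ : ‖ψ‖ = 1) (hval : ψ w = (‖w‖ : ℂ)) : 0 ≤ (ψ (x * w)).re := by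
  have hwpos : (0:ℝ) < ‖w‖ := norm_pos_iff.mpr hw
  set M : A →L[ℂ] A := (ContinuousLinearMap.mul ℂ A).flip w with hM
  have hMapp : ∀ c, M c = c * w := fun c => rfl
  have hMnorm : ‖M‖ ≤ ‖w‖ := by
    refine ContinuousLinearMap.opNorm_le_bound _ (norm_nonneg w) fun c => ?_
    rw [hMapp, mul_comm ‖w‖]
    exact norm_mul_le c w
  set φ : StrongDual ℂ A := ((‖w‖ : ℂ)⁻¹) • (ψ.comp M) with hφ
  have hφapp : ∀ c, φ c = (‖w‖ : ℂ)⁻¹ * ψ (c * w) := by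
    intro c
    simp [hφ, hMapp, smul_eq_mul]
  have hwC : (‖w‖ : ℂ) ≠ 0 := by exact_mod_cast hwpos.ne'
  have hφ1 : φ 1 = 1 := by
    rw [hφapp, one_mul, hval, inv_mul_cancel₀ hwC]
  have hφle : ‖φ‖ ≤ 1 := by
    have h1 : ‖φ‖ ≤ ‖((‖w‖ : ℂ)⁻¹)‖ * ‖ψ.comp M‖ := by rw [hφ]; exact norm_smul_le ((‖w‖ : ℂ)⁻¹) (ψ.comp M : A →L[ℂ] ℂ)
    have h2 : ‖ψ.comp M‖ ≤ ‖ψ‖ * ‖M‖ := ContinuousLinearMap.opNorm_comp_le _ _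
    have h3 : ‖((‖w‖ : ℂ)⁻¹)‖ = ‖w‖⁻¹ := by
      rw [norm_inv, Complex.norm_real, Real.norm_eq_abs, abs_of_pos hwpos]
    calc ‖φ‖ ≤ ‖w‖⁻¹ * (‖ψ‖ * ‖M‖) := by rw [← h3]; exact h1.trans (by gcongr)
    _ ≤ ‖w‖⁻¹ * (1 * ‖w‖) := by
        have := inv_nonneg.mpr hwpos.le
        gcongr
        · rw [hψ]
    _ = 1 := by field_simp
  have hφnorm : ‖φ‖ = 1 := by
    refine le_antisymm hφle ?_
    have := φ.le_opNorm 1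
    rw [hφ1] at this
    simpa using this
  have h := hacc φ hφnorm hφ1
  rw [hφapp] at h
  have hre : ((‖w‖ : ℂ)⁻¹ * ψ (x * w)).re = ‖w‖⁻¹ * (ψ (x * w)).re := by
    rw [← Complex.ofReal_inv, Complex.re_ofReal_mul]
  rw [hre] at h
  by_contra h'
  push_neg at h'
  nlinarith [mul_pos (inv_pos.mpr hwpos) (neg_pos.mpr h')]

lemma almost_eigen (lam : ℂ) (b : A) (hb : ‖b‖ = 1) : -‖x * b - lam • b‖ ≤ lam.re := by
  have hb0 : b ≠ 0 := by intro h; rw [h, norm_zero] at hb; norm_num at hb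
  obtain ⟨ψ, hψ, hval⟩ := exists_dual_vector ℂ b (norm_ne_zero_iff.mpr hb0)
  have h := re_nonneg_of_attain x hacc b hb0 ψ hψ hval
  have heq : ψ (x * b) = ψ (x * b - lam • b) + lam := by
    rw [map_sub, map_smul, hval, hb, smul_eq_mul]
    push_cast
    ring
  rw [heq, Complex.add_re] at h
  have h2 : (ψ (x * b - lam • b)).re ≤ ‖x * b - lam • b‖ := by
    refine (Complex.re_le_norm _).trans ?_
    have := ψ.le_opNorm (x * b - lam • b)
    rw [hψ, one_mul] at this
    exact this
  linarith

lemma res_norm (t : ℝ) (ht : 0 < t) (w : A)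
    (h1 : (((t:ℝ) : ℂ) • 1 + x) * w = 1) : ‖w‖ ≤ 1 / t := by
  have hw0 : w ≠ 0 := by rintro rfl; rw [mul_zero] at h1; exact one_ne_zero' (A := A) h1.symm
  obtain ⟨ψ, hψ, hval₀⟩ := exists_dual_vector ℂ w (norm_ne_zero_iff.mpr hw0)
  have hval : ψ w = ((‖w‖ : ℝ) : ℂ) := hval₀
  have h := re_nonneg_of_attain x hacc w hw0 ψ hψ hval
  have hxw : x * w = 1 - ((t:ℝ) : ℂ) • w := by
    rw [add_mul, smul_mul_assoc, one_mul] at h1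
    rw [← h1]
    abel
  rw [hxw, map_sub, map_smul, hval, smul_eq_mul, Complex.sub_re,
    Complex.re_ofReal_mul] at h
  rw [Complex.ofReal_re] at h
  have h2 : (ψ 1).re ≤ 1 := by
    refine (Complex.re_le_norm _).trans ?_
    have := ψ.le_opNorm 1
    rw [hψ, one_mul, norm_one] at this
    exact this
  rw [le_div_iff₀ ht, mul_comm]
  linarith

omit hacc in
lemma res_big (u : ℝ) (hu : ‖x‖ < u) :
    ∃ w : A, w ∈ Dalg x ∧ (((u:ℝ):ℂ) • 1 + x) * w = 1 ∧ w * (((u:ℝ):ℂ) • 1 + x) = 1 := by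
  have hu0 : (0:ℝ) < u := lt_of_le_of_lt (norm_nonneg x) hu
  have huC : ((u:ℝ):ℂ) ≠ 0 := by exact_mod_cast hu0.ne'
  set r : A := -(((u:ℝ):ℂ)⁻¹ • x) with hr
  have hrn : ‖r‖ < 1 := by
    rw [hr, norm_neg, norm_smul, norm_inv]
    have h4 : ‖((u:ℝ):ℂ)‖ = u := by
      rw [Complex.norm_real, Real.norm_eq_abs, abs_of_pos hu0]
    rw [h4, inv_mul_lt_iff₀ hu0, mul_one]
    exact hu
  have hsum : Summable (fun n : ℕ => r ^ n) := summable_geometric_of_norm_lt_one hrn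
  set s : A := ∑' n : ℕ, r ^ n with hs
  have hrD : r ∈ Dalg x := neg_mem (SMulMemClass.smul_mem _ (x_mem_Dalg x))
  have hsD : s ∈ Dalg x := tsum_mem_Dalg x _ (fun n => pow_mem hrD n) hsum
  have h1 : s * (1 - r) = 1 := geom_series_mul_neg r hrn
  have h2 : (1 - r) * s = 1 := mul_neg_geom_series r hrn
  have hur : ((u:ℝ):ℂ) • r = -x := by
    rw [hr, smul_neg, smul_smul, mul_inv_cancel₀ huC, one_smul]
  have key : ((u:ℝ):ℂ) • (1:A) + x = ((u:ℝ):ℂ) • ((1:A) - r) := by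
    rw [smul_sub, hur, sub_neg_eq_add]
  refine ⟨((u:ℝ):ℂ)⁻¹ • s, SMulMemClass.smul_mem _ hsD, ?_, ?_⟩
  · rw [key, smul_mul_smul_comm, mul_inv_cancel₀ huC, h2, one_smul]
  · rw [key, smul_mul_smul_comm, inv_mul_cancel₀ huC, h1, one_smul]

lemma res (t : ℝ) (ht : 0 < t) :
    ∃ w : A, w ∈ Dalg x ∧ (((t:ℝ):ℂ) • 1 + x) * w = 1 ∧ w * (((t:ℝ):ℂ) • 1 + x) = 1 := by
  -- start from the big resolvent at `‖x‖ + t` and take one Neumann-series step down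
  obtain ⟨w1, hw1D, hw1l, hw1r⟩ := res_big x (‖x‖ + t) (by linarith)
  set t1 : ℝ := ‖x‖ + t with ht1
  have ht1p : 0 < t1 := by positivity
  have hw1n : ‖w1‖ ≤ 1 / t1 := res_norm x hacc t1 ht1p w1 hw1l
  by_cases hxt : ‖x‖ = 0
  · -- then t1 = t
    have : t1 = t := by rw [ht1, hxt, zero_add]
    rw [this] at hw1l hw1r
    exact ⟨w1, hw1D, hw1l, hw1r⟩
  · set q : A := ((t1 - t : ℝ) : ℂ) • w1 with hq
    have hqD : q ∈ Dalg x := SMulMemClass.smul_mem _ hw1D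
    have hqn : ‖q‖ < 1 := by
      rw [hq, norm_smul]
      have h4 : ‖((t1 - t : ℝ):ℂ)‖ = t1 - t := by
        rw [Complex.norm_real, Real.norm_eq_abs, abs_of_pos (by have hx0 : 0 < ‖x‖ := lt_of_le_of_ne (norm_nonneg x) (Ne.symm hxt); rw [ht1]; linarith)]
      rw [h4]
      calc (t1 - t) * ‖w1‖ ≤ (t1 - t) * (1 / t1) := by
            have : (0:ℝ) ≤ t1 - t := by rw [ht1]; linarith [norm_nonneg x]
            exact mul_le_mul_of_nonneg_left hw1n this
      _ < 1 := by
          rw [mul_one_div, div_lt_one ht1p]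
          linarith
    have hsum : Summable (fun n : ℕ => q ^ n) := summable_geometric_of_norm_lt_one hqn
    set sq : A := ∑' n : ℕ, q ^ n with hsq
    have hsqD : sq ∈ Dalg x := tsum_mem_Dalg x _ (fun n => pow_mem hqD n) hsum
    have h1 : sq * (1 - q) = 1 := geom_series_mul_neg q hqn
    have h2 : (1 - q) * sq = 1 := mul_neg_geom_series q hqn
    have keyl : ((t:ℝ):ℂ) • (1:A) + x = (((t1:ℝ):ℂ) • 1 + x) * (1 - q) := by
      rw [mul_sub, mul_one, hq, mul_smul_comm, hw1l]
      have : (((t1 - t:ℝ)):ℂ) • (1:A) = ((t1:ℝ):ℂ) • 1 - ((t:ℝ):ℂ) • (1:A) := by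
        rw [← sub_smul]
        norm_cast
      rw [this]
      abel
    have keyr : ((t:ℝ):ℂ) • (1:A) + x = (1 - q) * (((t1:ℝ):ℂ) • 1 + x) := by
      rw [sub_mul, one_mul, hq, smul_mul_assoc, hw1r]
      have : (((t1 - t:ℝ)):ℂ) • (1:A) = ((t1:ℝ):ℂ) • 1 - ((t:ℝ):ℂ) • (1:A) := by
        rw [← sub_smul]
        norm_cast
      rw [this]
      abel
    have hcomm : w1 * (1 - q) = (1 - q) * w1 := by
      rw [mul_sub, sub_mul, mul_one, one_mul, hq, mul_smul_comm, smul_mul_assoc]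
    refine ⟨sq * w1, mul_mem hsqD hw1D, ?_, ?_⟩
    · -- ((t•1+x)) * (sq * w1) = (t1•1+x) * ((1-q) * sq) * w1 = (t1•1+x) * w1 = 1
      rw [keyl]
      calc ((((t1:ℝ):ℂ) • 1 + x) * (1 - q)) * (sq * w1)
          = (((t1:ℝ):ℂ) • 1 + x) * ((1 - q) * sq) * w1 := by simp only [mul_assoc]
      _ = 1 := by rw [h2, mul_one, hw1l]
    · rw [keyr]
      calc (sq * w1) * ((1 - q) * (((t1:ℝ):ℂ) • 1 + x))
          = sq * ((w1 * (1 - q)) * (((t1:ℝ):ℂ) • 1 + x)) := by rw [mul_assoc, mul_assoc]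
      _ = sq * ((1 - q) * (w1 * (((t1:ℝ):ℂ) • 1 + x))) := by rw [hcomm, mul_assoc]
      _ = sq * (1 - q) := by rw [hw1r, mul_one]
      _ = 1 := h1

/-- Common resolvent-sequence setup. -/
lemma resolvent_seq :
    ∃ (W : ℕ → A), ∀ n : ℕ, W n ∈ Dalg x ∧
      (((1/((n:ℝ)+1) : ℝ):ℂ) • 1 + x) * W n = 1 ∧
      W n * (((1/((n:ℝ)+1) : ℝ):ℂ) • 1 + x) = 1 ∧
      ‖W n‖ ≤ (n:ℝ) + 1 := by
  have hres : ∀ n : ℕ, ∃ w : A, w ∈ Dalg x ∧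
      (((1/((n:ℝ)+1) : ℝ):ℂ) • 1 + x) * w = 1 ∧ w * (((1/((n:ℝ)+1) : ℝ):ℂ) • 1 + x) = 1 := by
    intro n
    exact res x hacc (1/((n:ℝ)+1)) (by positivity)
  choose W hWD hWl hWr using hres
  refine ⟨W, fun n => ⟨hWD n, hWl n, hWr n, ?_⟩⟩
  have h := res_norm x hacc (1/((n:ℝ)+1)) (by positivity) (W n) (hWl n)
  rw [one_div, one_div, inv_inv] at h
  exact h

lemma U_props (W : ℕ → A)
    (hW : ∀ n : ℕ, W n ∈ Dalg x ∧ (((1/((n:ℝ)+1) : ℝ):ℂ) • 1 + x) * W n = 1 ∧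
      W n * (((1/((n:ℝ)+1) : ℝ):ℂ) • 1 + x) = 1 ∧ ‖W n‖ ≤ (n:ℝ) + 1) :
    (∀ n, x * W n = 1 - ((1/((n:ℝ)+1) : ℝ):ℂ) • W n) ∧
    (∀ n, ‖x * W n‖ ≤ 2) ∧
    (∀ n m, x * W n - x * W m =
      ((1/((m:ℝ)+1) - 1/((n:ℝ)+1) : ℝ):ℂ) • (W n * (x * W m))) := by
  have hU : ∀ n, x * W n = 1 - ((1/((n:ℝ)+1) : ℝ):ℂ) • W n := by
    intro n
    have h := (hW n).2.1
    rw [add_mul, smul_mul_assoc, one_mul] at h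
    rw [← h]
    abel
  have hUn : ∀ n, ‖x * W n‖ ≤ 2 := by
    intro n
    rw [hU n]
    refine (norm_sub_le _ _).trans ?_
    rw [norm_one, norm_smul]
    have h1 : ‖((1/((n:ℝ)+1) : ℝ):ℂ)‖ = 1/((n:ℝ)+1) := by
      rw [Complex.norm_real, Real.norm_eq_abs, abs_of_pos (by positivity)]
    have h2 : (1/((n:ℝ)+1)) * ‖W n‖ ≤ 1 := by
      calc (1/((n:ℝ)+1)) * ‖W n‖ ≤ (1/((n:ℝ)+1)) * ((n:ℝ)+1) := by
            exact mul_le_mul_of_nonneg_left (hW n).2.2.2 (by positivity)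
      _ = 1 := by field_simp
    rw [h1]
    linarith
  refine ⟨hU, hUn, ?_⟩
  intro n m
  -- resolvent identity
  have key : W n = W m + ((1/((m:ℝ)+1) - 1/((n:ℝ)+1) : ℝ):ℂ) • (W n * W m) := by
    have h1 : W n * ((((1/((m:ℝ)+1) : ℝ):ℂ) • 1 + x) * W m) = W n := by
      rw [(hW m).2.1, mul_one]
    have h2 : (W n * (((1/((m:ℝ)+1) : ℝ):ℂ) • 1 + x)) * W m
        = W m + ((1/((m:ℝ)+1) - 1/((n:ℝ)+1) : ℝ):ℂ) • (W n * W m) := by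
      have h3 : W n * (((1/((m:ℝ)+1) : ℝ):ℂ) • 1 + x)
          = 1 + ((1/((m:ℝ)+1) - 1/((n:ℝ)+1) : ℝ):ℂ) • W n := by
        have h4 : (((1/((m:ℝ)+1) : ℝ):ℂ) • (1:A) + x)
            = (((1/((n:ℝ)+1) : ℝ):ℂ) • 1 + x) + ((1/((m:ℝ)+1) - 1/((n:ℝ)+1) : ℝ):ℂ) • (1:A) := by
          push_cast
          rw [sub_smul]
          abel
        rw [h4, mul_add, (hW n).2.2.1, mul_smul_comm, mul_one]
      rw [h3, add_mul, one_mul, smul_mul_assoc]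
    rw [← mul_assoc] at h1
    rw [h2] at h1
    exact h1.symm
  calc x * W n - x * W m
      = x * (W n - W m) := by rw [mul_sub]
  _ = x * (((1/((m:ℝ)+1) - 1/((n:ℝ)+1) : ℝ):ℂ) • (W n * W m)) := by
      rw [(show W n - W m = ((1/((m:ℝ)+1) - 1/((n:ℝ)+1) : ℝ):ℂ) • (W n * W m) by
        nth_rewrite 1 [key]; abel)]
  _ = ((1/((m:ℝ)+1) - 1/((n:ℝ)+1) : ℝ):ℂ) • (W n * (x * W m)) := by
      rw [mul_smul_comm]
      congr 1
      rw [← mul_assoc, ← mul_assoc, comm_Dalg x x (x_mem_Dalg x) (W n) (hW n).1]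

lemma build_u_left (hcl : IsClosed {w : A | ∃ a : A, w = x * a}) :
    ∃ u : A, u ∈ Bset x ∧ (∃ a : A, u = x * a) ∧ x * u = x ∧ u * x = x := by
  classical
  obtain ⟨W, hW⟩ := resolvent_seq x hacc
  obtain ⟨hU, hUn, hdiff⟩ := U_props x hacc W hW
  set t : ℕ → ℝ := fun n => 1/((n:ℝ)+1) with htdef
  set U : ℕ → A := fun n => x * W n with hUdef
  -- open mapping constant
  set L : A →L[ℂ] A := ContinuousLinearMap.mul ℂ A x with hL
  have hLa : ∀ a, L a = x * a := fun a => rfl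
  set p : Submodule ℂ A := LinearMap.range (L : A →ₗ[ℂ] A) with hp
  have hps : (p : Set A) = {w : A | ∃ a : A, w = x * a} := by
    ext w
    constructor
    · rintro ⟨a, rfl⟩; exact ⟨a, rfl⟩
    · rintro ⟨a, rfl⟩; exact ⟨a, rfl⟩
  have hclp : IsClosed (p : Set A) := by rw [hps]; exact hcl
  haveI : CompleteSpace p := hclp.completeSpace_coe
  set L' : A →L[ℂ] p := L.codRestrict p (fun a => LinearMap.mem_range_self _ a) with hL'
  have hsurj : Function.Surjective L' := by
    rintro ⟨w, hw⟩
    obtain ⟨a, ha⟩ := hw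
    exact ⟨a, Subtype.ext ha⟩
  obtain ⟨C, hCpos, hC⟩ := L'.exists_preimage_norm_le hsurj
  -- Lipschitz bound
  have hlip : ∀ n m : ℕ, ‖U n - U m‖ ≤ |t m - t n| * (4 * C) := by
    intro n m
    have hmem : U m ∈ p := ⟨W m, rfl⟩
    obtain ⟨a, ha, han⟩ := hC ⟨U m, hmem⟩
    have ha' : x * a = U m := by
      have := congrArg Subtype.val ha
      exact this
    have han' : ‖a‖ ≤ C * ‖U m‖ := han
    have hfact : W n * U m = U n * a := by
      rw [← ha', ← mul_assoc, comm_Dalg x (W n) (hW n).1 x (x_mem_Dalg x)]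
    have hb : ‖W n * U m‖ ≤ 4 * C := by
      rw [hfact]
      calc ‖U n * a‖ ≤ ‖U n‖ * ‖a‖ := norm_mul_le _ _
      _ ≤ 2 * (C * ‖U m‖) := by
          refine mul_le_mul (hUn n) han' (norm_nonneg a) (by norm_num)
      _ ≤ 2 * (C * 2) := by
          have := hUn m
          gcongr
      _ = 4 * C := by ring
    have e1 : U n - U m = ((t m - t n : ℝ):ℂ) • (W n * U m) := hdiff n m
    calc ‖U n - U m‖ = ‖((t m - t n : ℝ):ℂ) • (W n * U m)‖ := by rw [e1]
    _ = |t m - t n| * ‖W n * U m‖ := by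
        rw [norm_smul, Complex.norm_real, Real.norm_eq_abs]
    _ ≤ |t m - t n| * (4 * C) := by
        exact mul_le_mul_of_nonneg_left hb (abs_nonneg _)
  -- Cauchy
  have htmono : ∀ N n : ℕ, N ≤ n → t n ≤ t N := by
    intro N n h
    apply one_div_le_one_div_of_le (by positivity)
    have : (N:ℝ) ≤ n := Nat.cast_le.mpr h
    linarith
  have htpos : ∀ n : ℕ, 0 < t n := fun n => by positivity
  have hcauchy : CauchySeq U := by
    refine cauchySeq_of_le_tendsto_0 (fun N => (1/((N:ℝ)+1)) * (4 * C)) (fun n m N hn hm => ?_) ?_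
    · rw [dist_eq_norm]
      refine (hlip n m).trans ?_
      have h1 : |t m - t n| ≤ t N := by
        rw [abs_sub_le_iff]
        constructor
        · linarith [htmono N m hm, (htpos n).le]
        · linarith [htmono N n hn, (htpos m).le]
      exact mul_le_mul_of_nonneg_right h1 (by positivity)
    · have h0 : Tendsto (fun N : ℕ => 1/((N:ℝ)+1)) atTop (nhds 0) :=
        tendsto_one_div_add_atTop_nhds_zero_nat
      have h1 := h0.mul_const (4 * C)
      simpa using h1
  obtain ⟨u, hu⟩ := cauchySeq_tendsto_of_complete hcauchy
  have hUB : ∀ n, U n ∈ Bset x := fun n =>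
    (mul_mem_Bset_of_Dalg x (W n) (hW n).1 x (x_mem_Bset x)).2
  have huB : u ∈ Bset x := (isClosed_Bset x).mem_of_tendsto hu (Eventually.of_forall hUB)
  have hup : u ∈ (p : Set A) := hclp.mem_of_tendsto hu (Eventually.of_forall fun n => ⟨W n, rfl⟩)
  have hxU : ∀ n, x * U n = x - ((t n : ℝ):ℂ) • U n := by
    intro n
    have h' := congrArg (fun z => x * z) (hU n)
    calc x * U n = x * (x * W n) := rfl
    _ = x * (1 - ((1/((n:ℝ)+1) : ℝ):ℂ) • W n) := h'
    _ = x - ((1/((n:ℝ)+1) : ℝ):ℂ) • (x * W n) := by rw [mul_sub, mul_one, mul_smul_comm]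
    _ = x - ((t n : ℝ):ℂ) • U n := rfl
  have hcommU : ∀ n, U n * x = x * U n := by
    intro n
    calc U n * x = (x * W n) * x := rfl
    _ = x * (W n * x) := by rw [mul_assoc]
    _ = x * (x * W n) := by rw [comm_Dalg x (W n) (hW n).1 x (x_mem_Dalg x)]
    _ = x * U n := rfl
  have hUx : ∀ n, U n * x = x - ((t n : ℝ):ℂ) • U n := fun n => by
    rw [hcommU n, hxU n]
  have htU0 : Tendsto (fun n => ((t n : ℝ):ℂ) • U n) atTop (nhds 0) := by
    have hb : ∀ n, ‖((t n : ℝ):ℂ) • U n‖ ≤ t n * 2 := by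
      intro n
      rw [norm_smul, Complex.norm_real, Real.norm_eq_abs, abs_of_pos (htpos n)]
      exact mul_le_mul_of_nonneg_left (hUn n) (htpos n).le
    have h0 : Tendsto (fun n : ℕ => (1/((n:ℝ)+1)) * 2) atTop (nhds 0) := by
      have h1 : Tendsto (fun n : ℕ => 1/((n:ℝ)+1)) atTop (nhds 0) :=
        tendsto_one_div_add_atTop_nhds_zero_nat
      have h2 := h1.mul_const (2:ℝ)
      simpa using h2
    exact squeeze_zero_norm hb h0
  have hxu : x * u = x := by
    have h1 : Tendsto (fun n => x * U n) atTop (nhds (x * u)) :=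
      (continuous_mul_left x).continuousAt.tendsto.comp hu
    have h2 : Tendsto (fun n => x * U n) atTop (nhds x) := by
      have : (fun n => x * U n) = fun n => x - ((t n : ℝ):ℂ) • U n := funext hxU
      rw [this]
      simpa using tendsto_const_nhds.sub htU0
    exact tendsto_nhds_unique h1 h2
  have hux : u * x = x := by
    have h1 : Tendsto (fun n => U n * x) atTop (nhds (u * x)) :=
      (continuous_mul_right x).continuousAt.tendsto.comp hu
    have h2 : Tendsto (fun n => U n * x) atTop (nhds x) := by
      have : (fun n => U n * x) = fun n => x - ((t n : ℝ):ℂ) • U n := funext hUx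
      rw [this]
      simpa using tendsto_const_nhds.sub htU0
    exact tendsto_nhds_unique h1 h2
  rw [hps] at hup
  exact ⟨u, huB, hup, hxu, hux⟩

lemma build_u_right (hcl : IsClosed {w : A | ∃ a : A, w = a * x}) :
    ∃ u : A, u ∈ Bset x ∧ (∃ a : A, u = a * x) ∧ x * u = x ∧ u * x = x := by
  classical
  obtain ⟨W, hW⟩ := resolvent_seq x hacc
  obtain ⟨hU, hUn, hdiff⟩ := U_props x hacc W hW
  set t : ℕ → ℝ := fun n => 1/((n:ℝ)+1) with htdef
  set U : ℕ → A := fun n => x * W n with hUdef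
  set L : A →L[ℂ] A := (ContinuousLinearMap.mul ℂ A).flip x with hL
  have hLa : ∀ a, L a = a * x := fun a => rfl
  set p : Submodule ℂ A := LinearMap.range (L : A →ₗ[ℂ] A) with hp
  have hps : (p : Set A) = {w : A | ∃ a : A, w = a * x} := by
    ext w
    constructor
    · rintro ⟨a, rfl⟩; exact ⟨a, rfl⟩
    · rintro ⟨a, rfl⟩; exact ⟨a, rfl⟩
  have hclp : IsClosed (p : Set A) := by rw [hps]; exact hcl
  haveI : CompleteSpace p := hclp.completeSpace_coe
  set L' : A →L[ℂ] p := L.codRestrict p (fun a => LinearMap.mem_range_self _ a) with hL'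
  have hsurj : Function.Surjective L' := by
    rintro ⟨w, hw⟩
    obtain ⟨a, ha⟩ := hw
    exact ⟨a, Subtype.ext ha⟩
  obtain ⟨C, hCpos, hC⟩ := L'.exists_preimage_norm_le hsurj
  have hlip : ∀ n m : ℕ, ‖U n - U m‖ ≤ |t m - t n| * (4 * C) := by
    intro n m
    have hUmD : U m ∈ Dalg x := mul_mem (x_mem_Dalg x) (hW m).1
    have hmem : U m ∈ p := ⟨W m, comm_Dalg x (W m) (hW m).1 x (x_mem_Dalg x)⟩
    obtain ⟨a, ha, han⟩ := hC ⟨U m, hmem⟩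
    have ha' : a * x = U m := congrArg Subtype.val ha
    have han' : ‖a‖ ≤ C * ‖U m‖ := han
    have hfact : W n * U m = a * U n := by
      rw [comm_Dalg x (W n) (hW n).1 (U m) hUmD, ← ha', mul_assoc]
    have hb : ‖W n * U m‖ ≤ 4 * C := by
      rw [hfact]
      calc ‖a * U n‖ ≤ ‖a‖ * ‖U n‖ := norm_mul_le _ _
      _ ≤ (C * ‖U m‖) * 2 := by
          refine mul_le_mul han' (hUn n) (norm_nonneg _) (by positivity)
      _ ≤ (C * 2) * 2 := by
          have := hUn m
          gcongr
      _ ≤ 4 * C := by linarith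
    have e1 : U n - U m = ((t m - t n : ℝ):ℂ) • (W n * U m) := hdiff n m
    calc ‖U n - U m‖ = ‖((t m - t n : ℝ):ℂ) • (W n * U m)‖ := by rw [e1]
    _ = |t m - t n| * ‖W n * U m‖ := by
        rw [norm_smul, Complex.norm_real, Real.norm_eq_abs]
    _ ≤ |t m - t n| * (4 * C) := by
        exact mul_le_mul_of_nonneg_left hb (abs_nonneg _)
  have htmono : ∀ N n : ℕ, N ≤ n → t n ≤ t N := by
    intro N n h
    apply one_div_le_one_div_of_le (by positivity)
    have : (N:ℝ) ≤ n := Nat.cast_le.mpr h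
    linarith
  have htpos : ∀ n : ℕ, 0 < t n := fun n => by positivity
  have hcauchy : CauchySeq U := by
    refine cauchySeq_of_le_tendsto_0 (fun N => (1/((N:ℝ)+1)) * (4 * C)) (fun n m N hn hm => ?_) ?_
    · rw [dist_eq_norm]
      refine (hlip n m).trans ?_
      have h1 : |t m - t n| ≤ t N := by
        rw [abs_sub_le_iff]
        constructor
        · linarith [htmono N m hm, (htpos n).le]
        · linarith [htmono N n hn, (htpos m).le]
      exact mul_le_mul_of_nonneg_right h1 (by positivity)
    · have h0 : Tendsto (fun N : ℕ => 1/((N:ℝ)+1)) atTop (nhds 0) :=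
        tendsto_one_div_add_atTop_nhds_zero_nat
      have h1 := h0.mul_const (4 * C)
      simpa using h1
  obtain ⟨u, hu⟩ := cauchySeq_tendsto_of_complete hcauchy
  have hUB : ∀ n, U n ∈ Bset x := fun n =>
    (mul_mem_Bset_of_Dalg x (W n) (hW n).1 x (x_mem_Bset x)).2
  have huB : u ∈ Bset x := (isClosed_Bset x).mem_of_tendsto hu (Eventually.of_forall hUB)
  have hup : u ∈ (p : Set A) := hclp.mem_of_tendsto hu (Eventually.of_forall fun n =>
    ⟨W n, comm_Dalg x (W n) (hW n).1 x (x_mem_Dalg x)⟩)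
  have hxU : ∀ n, x * U n = x - ((t n : ℝ):ℂ) • U n := by
    intro n
    have h' := congrArg (fun z => x * z) (hU n)
    calc x * U n = x * (x * W n) := rfl
    _ = x * (1 - ((1/((n:ℝ)+1) : ℝ):ℂ) • W n) := h'
    _ = x - ((1/((n:ℝ)+1) : ℝ):ℂ) • (x * W n) := by rw [mul_sub, mul_one, mul_smul_comm]
    _ = x - ((t n : ℝ):ℂ) • U n := rfl
  have hcommU : ∀ n, U n * x = x * U n := by
    intro n
    calc U n * x = (x * W n) * x := rfl
    _ = x * (W n * x) := by rw [mul_assoc]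
    _ = x * (x * W n) := by rw [comm_Dalg x (W n) (hW n).1 x (x_mem_Dalg x)]
    _ = x * U n := rfl
  have hUx : ∀ n, U n * x = x - ((t n : ℝ):ℂ) • U n := fun n => by
    rw [hcommU n, hxU n]
  have htU0 : Tendsto (fun n => ((t n : ℝ):ℂ) • U n) atTop (nhds 0) := by
    have hb : ∀ n, ‖((t n : ℝ):ℂ) • U n‖ ≤ t n * 2 := by
      intro n
      rw [norm_smul, Complex.norm_real, Real.norm_eq_abs, abs_of_pos (htpos n)]
      exact mul_le_mul_of_nonneg_left (hUn n) (htpos n).le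
    have h0 : Tendsto (fun n : ℕ => (1/((n:ℝ)+1)) * 2) atTop (nhds 0) := by
      have h1 : Tendsto (fun n : ℕ => 1/((n:ℝ)+1)) atTop (nhds 0) :=
        tendsto_one_div_add_atTop_nhds_zero_nat
      have h2 := h1.mul_const (2:ℝ)
      simpa using h2
    exact squeeze_zero_norm hb h0
  have hxu : x * u = x := by
    have h1 : Tendsto (fun n => x * U n) atTop (nhds (x * u)) :=
      (continuous_mul_left x).continuousAt.tendsto.comp hu
    have h2 : Tendsto (fun n => x * U n) atTop (nhds x) := by
      have : (fun n => x * U n) = fun n => x - ((t n : ℝ):ℂ) • U n := funext hxU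
      rw [this]
      simpa using tendsto_const_nhds.sub htU0
    exact tendsto_nhds_unique h1 h2
  have hux : u * x = x := by
    have h1 : Tendsto (fun n => U n * x) atTop (nhds (u * x)) :=
      (continuous_mul_right x).continuousAt.tendsto.comp hu
    have h2 : Tendsto (fun n => U n * x) atTop (nhds x) := by
      have : (fun n => U n * x) = fun n => x - ((t n : ℝ):ℂ) • U n := funext hUx
      rw [this]
      simpa using tendsto_const_nhds.sub htU0
    exact tendsto_nhds_unique h1 h2
  rw [hps] at hup
  exact ⟨u, huB, hup, hxu, hux⟩

omit hacc in
lemma smul_mem_Bset (c : ℂ) (b : A) (hb : b ∈ Bset x) : c • b ∈ Bset x := by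
  have h : closure ((NonUnitalAlgebra.adjoin ℂ {x} : NonUnitalSubalgebra ℂ A) : Set A) ⊆
      {b : A | c • b ∈ Bset x} :=
    closure_minimal (fun a ha => subset_closure (SMulMemClass.smul_mem c ha))
      ((isClosed_Bset x).preimage (continuous_const_smul c))
  exact h hb

omit hacc in
lemma neumann_step (u : A) (huB : u ∈ Bset x)
    (hid : ∀ b ∈ Bset x, u * b = b ∧ b * u = b)
    (lam mu : ℂ) (g : A) (hgB : g ∈ Bset x)
    (hgl : (x - lam • u) * g = u) (hsmall : ‖mu - lam‖ * ‖g‖ < 1) :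
    ∃ g' ∈ Bset x, (x - mu • u) * g' = u ∧ g' * (x - mu • u) = u := by
  have huD : u ∈ Dalg x := Bset_subset_Dalg x huB
  have hgD : g ∈ Dalg x := Bset_subset_Dalg x hgB
  have hXD : x - lam • u ∈ Dalg x := sub_mem (x_mem_Dalg x) (SMulMemClass.smul_mem _ huD)
  set q : A := (mu - lam) • g with hq
  have hqD : q ∈ Dalg x := SMulMemClass.smul_mem _ hgD
  have hqB : q ∈ Bset x := smul_mem_Bset x _ _ hgB
  have hqn : ‖q‖ < 1 := by rw [hq, norm_smul]; exact hsmall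
  have hsum : Summable (fun n : ℕ => q ^ n) := summable_geometric_of_norm_lt_one hqn
  set s : A := ∑' n : ℕ, q ^ n with hs
  have hsD : s ∈ Dalg x := tsum_mem_Dalg x _ (fun n => pow_mem hqD n) hsum
  have h1 : s * (1 - q) = 1 := geom_series_mul_neg q hqn
  have hqpow : ∀ n : ℕ, q ^ (n+1) ∈ Bset x := by
    intro n
    induction n with
    | zero => rw [pow_one]; exact hqB
    | succ n ih =>
        rw [pow_succ]
        exact (mul_mem_Bset_of_Dalg x (q^(n+1)) (Bset_subset_Dalg x ih) q hqB).1
  have hs1u : s * (1 - u) = 1 - u := by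
    have hterm : ∀ n : ℕ, n ≠ 0 → q ^ n * (1 - u) = 0 := by
      intro n hn
      obtain ⟨m, rfl⟩ := Nat.exists_eq_succ_of_ne_zero hn
      have h2 := (hid (q^(m+1)) (hqpow m)).2
      rw [mul_sub, mul_one, h2, sub_self]
    have hsum2 : HasSum (fun n : ℕ => q ^ n * (1 - u)) ((q^0) * (1 - u)) :=
      hasSum_single 0 (fun n hn => hterm n hn)
    have h3 := hsum2.tsum_eq
    rw [pow_zero, one_mul] at h3
    calc s * (1 - u) = ∑' n : ℕ, q ^ n * (1 - u) := (hsum.tsum_mul_right _).symm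
    _ = 1 - u := h3
  set g' : A := s * g with hg'
  have hg'B : g' ∈ Bset x := (mul_mem_Bset_of_Dalg x s hsD g hgB).1
  have e1 : (x - lam • u) * g' = s * u := by
    rw [hg', ← mul_assoc, comm_Dalg x _ hXD s hsD, mul_assoc, hgl]
  have e2 : u * g' = s * g := by
    rw [hg', ← mul_assoc, comm_Dalg x u huD s hsD, mul_assoc, (hid g hgB).1]
  have key : (x - mu • u) * g' = u := by
    have hX' : x - mu • u = (x - lam • u) - (mu - lam) • u := by
      rw [sub_smul]; abel
    rw [hX', sub_mul, e1, smul_mul_assoc, e2]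
    have h4 : (mu - lam) • (s * g) = s * q := by rw [hq, mul_smul_comm]
    rw [h4]
    calc s * u - s * q = s * ((1:A) - q) - s * ((1:A) - u) := by
          rw [mul_sub, mul_sub, mul_one]
          abel
    _ = 1 - (1 - u) := by rw [h1, hs1u]
    _ = u := by abel
  have keyr : g' * (x - mu • u) = u := by
    have hg'D : g' ∈ Dalg x := mul_mem hsD hgD
    have hXD' : x - mu • u ∈ Dalg x := sub_mem (x_mem_Dalg x) (SMulMemClass.smul_mem _ huD)
    rw [comm_Dalg x g' hg'D _ hXD', key]
  exact ⟨g', hg'B, key, keyr⟩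

omit hacc in
lemma G_big (u : A) (huB : u ∈ Bset x)
    (hid : ∀ b ∈ Bset x, u * b = b ∧ b * u = b)
    (hxu : x * u = x) (lam : ℂ) (hlam : ‖x‖ < ‖lam‖) :
    ∃ g ∈ Bset x, (x - lam • u) * g = u ∧ g * (x - lam • u) = u := by
  have huD : u ∈ Dalg x := Bset_subset_Dalg x huB
  have hlampos : (0:ℝ) < ‖lam‖ := lt_of_le_of_lt (norm_nonneg x) hlam
  have hlam0 : lam ≠ 0 := by
    intro h
    rw [h, norm_zero] at hlampos
    exact lt_irrefl 0 hlampos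
  set r : A := lam⁻¹ • x with hr
  have hrD : r ∈ Dalg x := SMulMemClass.smul_mem _ (x_mem_Dalg x)
  have hrn : ‖r‖ < 1 := by
    rw [hr, norm_smul, norm_inv, inv_mul_lt_iff₀ hlampos, mul_one]
    exact hlam
  have hsum : Summable (fun n : ℕ => r ^ n) := summable_geometric_of_norm_lt_one hrn
  set s : A := ∑' n : ℕ, r ^ n with hs
  have hsD : s ∈ Dalg x := tsum_mem_Dalg x _ (fun n => pow_mem hrD n) hsum
  have h1 : s * (1 - r) = 1 := geom_series_mul_neg r hrn
  have hkey : x - lam • (1:A) = -(lam • ((1:A) - r)) := by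
    rw [smul_sub, hr, smul_smul, mul_inv_cancel₀ hlam0, one_smul]
    abel
  have e0 : s * (x - lam • (1:A)) = -(lam • (1:A)) := by
    rw [hkey, mul_neg, mul_smul_comm, h1]
  have e1 : (x - lam • u) * u = (x - lam • (1:A)) * u := by
    rw [sub_mul, sub_mul, smul_mul_assoc, smul_mul_assoc, one_mul, (hid u huB).1]
  set g : A := (-(lam⁻¹)) • (s * u) with hg
  have hsuB : s * u ∈ Bset x := (mul_mem_Bset_of_Dalg x s hsD u huB).1
  have hgB : g ∈ Bset x := smul_mem_Bset x _ _ hsuB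
  have hXD : x - lam • u ∈ Dalg x := sub_mem (x_mem_Dalg x) (SMulMemClass.smul_mem _ huD)
  have hc1 : (x - lam • u) * (s * u) = -(lam • u) := by
    calc (x - lam • u) * (s * u) = ((x - lam • u) * s) * u := by rw [mul_assoc]
    _ = (s * (x - lam • u)) * u := by rw [comm_Dalg x _ hXD s hsD]
    _ = s * ((x - lam • u) * u) := by rw [mul_assoc]
    _ = s * ((x - lam • (1:A)) * u) := by rw [e1]
    _ = (s * (x - lam • (1:A))) * u := by rw [mul_assoc]
    _ = (-(lam • (1:A))) * u := by rw [e0]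
    _ = -(lam • u) := by rw [neg_mul, smul_mul_assoc, one_mul]
  have keyl : (x - lam • u) * g = u := by
    rw [hg, mul_smul_comm, hc1, smul_neg, neg_smul, neg_neg, smul_smul,
      inv_mul_cancel₀ hlam0, one_smul]
  have keyr : g * (x - lam • u) = u := by
    have hgD : g ∈ Dalg x := SMulMemClass.smul_mem _ (mul_mem hsD huD)
    rw [comm_Dalg x g hgD _ hXD, keyl]
  exact ⟨g, hgB, keyl, keyr⟩

omit hacc in
lemma iii_to_i (y : A) (h : x * y * x = x) : IsClosed {w : A | ∃ a : A, w = x * a} := by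
  have hset : {w : A | ∃ a : A, w = x * a} = {w : A | (x * y) * w = w} := by
    ext w
    constructor
    · rintro ⟨a, rfl⟩
      show (x * y) * (x * a) = x * a
      rw [← mul_assoc, h]
    · intro hw
      exact ⟨y * w, by rw [← mul_assoc, hw]⟩
  rw [hset]
  exact isClosed_eq (continuous_mul_left (x * y)) continuous_id

omit hacc in
lemma iii_to_ii (y : A) (h : x * y * x = x) : IsClosed {w : A | ∃ a : A, w = a * x} := by
  have hset : {w : A | ∃ a : A, w = a * x} = {w : A | w * (y * x) = w} := by
    ext w
    constructor
    · rintro ⟨a, rfl⟩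
      show (a * x) * (y * x) = a * x
      rw [mul_assoc, ← mul_assoc x y x, h]
    · intro hw
      exact ⟨w * y, by rw [mul_assoc, hw]⟩
  rw [hset]
  exact isClosed_eq (continuous_mul_right (y * x)) continuous_id

lemma iii_to_iv (y : A) (hy : x * y * x = x) :
    ∃ u g : A, u ∈ Bset x ∧ g ∈ Bset x ∧ (∀ b ∈ Bset x, u * b = b ∧ b * u = b) ∧
      x * g = u ∧ g * x = u := by
  obtain ⟨u, huB, -, hxu, hux⟩ := build_u_left x hacc (iii_to_i x y hy)
  have hid : ∀ b ∈ Bset x, u * b = b ∧ b * u = b :=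
    fun b hb => ⟨leftid_Bset x u hux b hb, rightid_Bset x u hxu b hb⟩
  have huD : u ∈ Dalg x := Bset_subset_Dalg x huB
  have hex : (x * y) * x = x := hy
  have hfx : x * (y * x) = x := by rw [← mul_assoc]; exact hy
  have heb : ∀ b ∈ Bset x, (x * y) * b = b := leftid_Bset x (x * y) hex
  have hbf : ∀ b ∈ Bset x, b * (y * x) = b := rightid_Bset x (y * x) hfx
  have hy2x : ((u * y) * u) * x = u := by
    rw [mul_assoc, hux, mul_assoc]
    exact hbf u huB
  -- the G set argument: show `0 ∈ G`
  set G : Set ℂ := {lam | ∃ g ∈ Bset x, (x - lam • u) * g = u ∧ g * (x - lam • u) = u} with hG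
  have hGopen : IsOpen G := by
    rw [Metric.isOpen_iff]
    rintro lam ⟨g, hgB, hgl, hgr⟩
    refine ⟨1 / (‖g‖ + 1), by positivity, ?_⟩
    intro mu hmu
    rw [Metric.mem_ball, dist_eq_norm] at hmu
    have hsmall : ‖mu - lam‖ * ‖g‖ < 1 := by
      have h1 : ‖mu - lam‖ * ‖g‖ ≤ ‖mu - lam‖ * (‖g‖ + 1) := by
        have := norm_nonneg (mu - lam)
        nlinarith [norm_nonneg g]
      have h2 : ‖mu - lam‖ * (‖g‖ + 1) < (1 / (‖g‖ + 1)) * (‖g‖ + 1) := by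
        have hpos : (0:ℝ) < ‖g‖ + 1 := by positivity
        exact mul_lt_mul_of_pos_right hmu hpos
      have h3 : (1 / (‖g‖ + 1)) * (‖g‖ + 1) = 1 := by
        field_simp
      linarith
    obtain ⟨g', hg'B, hg'l, hg'r⟩ := neumann_step x u huB hid lam mu g hgB hgl hsmall
    exact ⟨g', hg'B, hg'l, hg'r⟩
  have hGbig : ∀ lam : ℂ, ‖x‖ < ‖lam‖ → lam ∈ G := by
    intro lam hlam
    obtain ⟨g, hgB, hgl, hgr⟩ := G_big x u huB hid hxu lam hlam
    exact ⟨g, hgB, hgl, hgr⟩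
  have hblow : ∀ lam : ℂ, lam ∉ G → ∀ mu : ℂ, ∀ g ∈ Bset x,
      (x - mu • u) * g = u → 1 ≤ ‖lam - mu‖ * ‖g‖ := by
    intro lam hlam mu g hgB hgl
    by_contra hcon
    push_neg at hcon
    obtain ⟨g', hg'B, hg'l, hg'r⟩ := neumann_step x u huB hid mu lam g hgB hgl hcon
    exact hlam ⟨g', hg'B, hg'l, hg'r⟩
  by_cases h0 : (0:ℂ) ∈ G
  · obtain ⟨g, hgB, hgl, hgr⟩ := h0
    rw [zero_smul, sub_zero] at hgl hgr
    exact ⟨u, g, huB, hgB, hid, hgl, hgr⟩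
  · exfalso
    -- σB is compact and nonempty
    set σB : Set ℂ := {lam | lam ∉ G} with hσB
    have h0σ : (0:ℂ) ∈ σB := h0
    have hσclosed : IsClosed σB := by
      have : σB = Gᶜ := rfl
      rw [this]
      exact hGopen.isClosed_compl
    have hσsub : σB ⊆ Metric.closedBall 0 ‖x‖ := by
      intro lam hlam
      rw [Metric.mem_closedBall, dist_zero_right]
      by_contra hc
      push_neg at hc
      exact hlam (hGbig lam hc)
    have hσcpt : IsCompact σB :=
      (isCompact_closedBall (0:ℂ) ‖x‖).of_isClosed_subset hσclosed hσsub
    obtain ⟨lam0, hlam0σ, hlam0min⟩ :=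
      hσcpt.exists_isMinOn ⟨0, h0σ⟩ (Complex.continuous_re.continuousOn)
    have hmin : ∀ z ∈ σB, lam0.re ≤ z.re := fun z hz => hlam0min hz
    -- resolvent blow-up near a boundary point `lam ∉ G` approached from `G`
    by_cases hcase : lam0.re < 0
    · -- approach lam0 from the left
      have hseq : ∀ k : ℕ, ∃ g ∈ Bset x,
          (x - (lam0 - ((1/((k:ℝ)+1) : ℝ):ℂ)) • u) * g = u ∧
          g * (x - (lam0 - ((1/((k:ℝ)+1) : ℝ):ℂ)) • u) = u := by
        intro k
        have hre : (lam0 - ((1/((k:ℝ)+1) : ℝ):ℂ)).re < lam0.re := by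
          rw [Complex.sub_re, Complex.ofReal_re]
          have : (0:ℝ) < 1/((k:ℝ)+1) := by positivity
          linarith
        have : lam0 - ((1/((k:ℝ)+1) : ℝ):ℂ) ∉ σB := by
          intro hmem
          exact absurd (hmin _ hmem) (not_le.mpr hre)
        exact not_not.mp this
      have hcontra : ∀ k : ℕ, lam0.re ≥ (1/((k:ℝ)+1)) * (1 - ‖u‖) := by
        intro k
        obtain ⟨g, hgB, hgl, hgr⟩ := hseq k
        set lamk : ℂ := lam0 - ((1/((k:ℝ)+1) : ℝ):ℂ) with hlamk
        have hgn : ((k:ℝ)+1) ≤ ‖g‖ := by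
          have h1 := hblow lam0 hlam0σ lamk g hgB hgl
          have h2 : ‖lam0 - lamk‖ = 1/((k:ℝ)+1) := by
            rw [hlamk]
            have : lam0 - (lam0 - ((1/((k:ℝ)+1) : ℝ):ℂ)) = ((1/((k:ℝ)+1) : ℝ):ℂ) := by ring
            rw [this, Complex.norm_real, Real.norm_eq_abs, abs_of_pos (by positivity)]
          rw [h2] at h1
          have h3 := mul_le_mul_of_nonneg_left h1 (by positivity : (0:ℝ) ≤ (k:ℝ)+1)
          rw [mul_one, ← mul_assoc] at h3
          have h4 : ((k:ℝ)+1) * (1/((k:ℝ)+1)) = 1 := by field_simp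
          rw [h4, one_mul] at h3
          exact h3
        have hgpos : (0:ℝ) < ‖g‖ := lt_of_lt_of_le (by positivity) hgn
        have hg0 : g ≠ 0 := by
          intro h
          rw [h, norm_zero] at hgpos
          exact lt_irrefl 0 hgpos
        set b : A := (‖g‖⁻¹ : ℝ) • g with hb
        have hbn : ‖b‖ = 1 := by
          rw [hb, norm_smul, norm_inv, Real.norm_eq_abs, abs_of_pos hgpos, inv_mul_cancel₀ hgpos.ne']
        have hxg : x * g - lamk • g = u := by
          have h1 : (x - lamk • u) * g = u := hgl
          rw [sub_mul, smul_mul_assoc, (hid g hgB).1] at h1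
          exact h1
        have hxb : x * b - lamk • b = (‖g‖⁻¹ : ℝ) • u := by
          rw [hb, mul_smul_comm, smul_comm lamk ((‖g‖⁻¹ : ℝ)) g, ← smul_sub, hxg]
        have hxbn : ‖x * b - lamk • b‖ ≤ (1/((k:ℝ)+1)) * ‖u‖ := by
          rw [hxb, norm_smul, norm_inv, Real.norm_eq_abs, abs_of_pos hgpos]
          have h5 : ‖g‖⁻¹ ≤ 1/((k:ℝ)+1) := by
            rw [one_div]
            exact inv_anti₀ (by positivity) hgn
          exact mul_le_mul_of_nonneg_right h5 (norm_nonneg u)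
        have halm := almost_eigen x hacc lamk b hbn
        have hlamkre : lamk.re = lam0.re - 1/((k:ℝ)+1) := by
          rw [hlamk, Complex.sub_re, Complex.ofReal_re]
        rw [hlamkre] at halm
        have h6 : -((1/((k:ℝ)+1)) * ‖u‖) ≤ lam0.re - 1/((k:ℝ)+1) := by
          refine le_trans ?_ halm
          rw [neg_le_neg_iff]
          exact hxbn
        nlinarith [h6]
      -- contradiction with lam0.re < 0
      obtain ⟨k, hk⟩ := exists_nat_gt ((‖u‖ - 1) / (-lam0.re))
      have hk1 : (‖u‖ - 1) / (-lam0.re) < (k:ℝ) + 1 := by linarith [hk]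
      have hneg : (0:ℝ) < -lam0.re := by linarith
      have h7 : ‖u‖ - 1 < ((k:ℝ)+1) * (-lam0.re) := by
        rw [div_lt_iff₀ hneg] at hk1
        exact hk1
      have h8 := hcontra k
      have hδ : (0:ℝ) < 1/((k:ℝ)+1) := by positivity
      have h9 : (1/((k:ℝ)+1)) * (‖u‖ - 1) < (1/((k:ℝ)+1)) * (((k:ℝ)+1) * (-lam0.re)) := by
        exact mul_lt_mul_of_pos_left h7 hδ
      have h10 : (1/((k:ℝ)+1)) * (((k:ℝ)+1) * (-lam0.re)) = -lam0.re := by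
        field_simp
      rw [h10] at h9
      nlinarith [h8, h9]
    · -- all of σB has nonnegative real part; approach 0 from the left
      push_neg at hcase
      have hseq : ∀ k : ℕ, ∃ g ∈ Bset x,
          (x - (-((1/((k:ℝ)+1) : ℝ):ℂ)) • u) * g = u ∧
          g * (x - (-((1/((k:ℝ)+1) : ℝ):ℂ)) • u) = u := by
        intro k
        have hre : (-((1/((k:ℝ)+1) : ℝ):ℂ)).re < 0 := by
          rw [Complex.neg_re, Complex.ofReal_re]
          have : (0:ℝ) < 1/((k:ℝ)+1) := by positivity
          linarith
        have : -((1/((k:ℝ)+1) : ℝ):ℂ) ∉ σB := by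
          intro hmem
          have := hmin _ hmem
          linarith [hcase.trans this]
        exact not_not.mp this
      obtain ⟨k, hk⟩ := exists_nat_gt (2 * (‖(u * y) * u‖) + 2 * (‖(u * y) * u‖ * ‖u‖))
      obtain ⟨g, hgB, hgl, hgr⟩ := hseq k
      set lamk : ℂ := -((1/((k:ℝ)+1) : ℝ):ℂ) with hlamk
      set y2 : A := (u * y) * u with hy2def
      have hgn : ((k:ℝ)+1) ≤ ‖g‖ := by
        have h1 := hblow 0 h0 lamk g hgB hgl
        have h2 : ‖(0:ℂ) - lamk‖ = 1/((k:ℝ)+1) := by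
          rw [hlamk, zero_sub, neg_neg, Complex.norm_real, Real.norm_eq_abs,
            abs_of_pos (by positivity)]
        rw [h2] at h1
        have h3 := mul_le_mul_of_nonneg_left h1 (by positivity : (0:ℝ) ≤ (k:ℝ)+1)
        rw [mul_one, ← mul_assoc] at h3
        have h4 : ((k:ℝ)+1) * (1/((k:ℝ)+1)) = 1 := by field_simp
        rw [h4, one_mul] at h3
        exact h3
      have hxg : x * g = lamk • g + u := by
        have h1 : (x - lamk • u) * g = u := hgl
        rw [sub_mul, smul_mul_assoc, (hid g hgB).1] at h1
        rw [← h1]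
        abel
      have hgrep : g = lamk • (y2 * g) + y2 * u := by
        calc g = u * g := ((hid g hgB).1).symm
        _ = (y2 * x) * g := by rw [hy2x]
        _ = y2 * (x * g) := by rw [mul_assoc]
        _ = y2 * (lamk • g + u) := by rw [hxg]
        _ = lamk • (y2 * g) + y2 * u := by rw [mul_add, mul_smul_comm]
      have hnlamk : ‖lamk‖ = 1/((k:ℝ)+1) := by
        rw [hlamk, norm_neg, Complex.norm_real, Real.norm_eq_abs, abs_of_pos (by positivity)]
      have hbound : ‖g‖ ≤ (1/((k:ℝ)+1)) * (‖y2‖ * ‖g‖) + ‖y2‖ * ‖u‖ := by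
        calc ‖g‖ = ‖lamk • (y2 * g) + y2 * u‖ := by rw [← hgrep]
        _ ≤ ‖lamk • (y2 * g)‖ + ‖y2 * u‖ := norm_add_le _ _
        _ ≤ (1/((k:ℝ)+1)) * (‖y2‖ * ‖g‖) + ‖y2‖ * ‖u‖ := by
            gcongr
            · rw [norm_smul, hnlamk]
              gcongr
              exact norm_mul_le _ _
            · exact norm_mul_le _ _
      -- derive contradiction
      have hy2n : (0:ℝ) ≤ ‖y2‖ := norm_nonneg _
      have hun : (0:ℝ) ≤ ‖u‖ := norm_nonneg _
      have hδk : (1/((k:ℝ)+1)) * (((k:ℝ)+1)) = 1 := by field_simp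
      have hk' : 2 * ‖y2‖ + 2 * (‖y2‖ * ‖u‖) < (k:ℝ) + 1 := by
        calc 2 * ‖y2‖ + 2 * (‖y2‖ * ‖u‖) < (k:ℝ) := by
              have := hk
              rw [hy2def]
              linarith [hk]
        _ ≤ (k:ℝ) + 1 := by linarith
      have hgpos : (0:ℝ) < ‖g‖ := lt_of_lt_of_le (by positivity) hgn
      -- (1/(k+1)) * ‖y2‖ ≤ 1/2
      have hhalf : (1/((k:ℝ)+1)) * ‖y2‖ ≤ 1/2 := by
        rw [div_mul_eq_mul_div, div_le_div_iff₀ (by positivity) (by norm_num : (0:ℝ) < 2)]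
        nlinarith [hk']
      have h11 : ‖g‖ ≤ (1/2) * ‖g‖ + ‖y2‖ * ‖u‖ := by
        have : (1/((k:ℝ)+1)) * (‖y2‖ * ‖g‖) ≤ (1/2) * ‖g‖ := by
          rw [← mul_assoc]
          exact mul_le_mul_of_nonneg_right hhalf (norm_nonneg g)
        linarith [hbound]
      have h12 : ‖g‖ ≤ 2 * (‖y2‖ * ‖u‖) := by linarith
      have h13 : ((k:ℝ)+1) ≤ 2 * (‖y2‖ * ‖u‖) := le_trans hgn h12
      nlinarith [hk']

omit hacc in
lemma spectral_gap (u g : A) (huB : u ∈ Bset x) (hgB : g ∈ Bset x)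
    (hid : ∀ b ∈ Bset x, u * b = b ∧ b * u = b)
    (hxg : x * g = u) (hgx : g * x = u)
    (z : ℂ) (hz : z ≠ 0) (hzn : ‖z‖ * ‖g‖ < 1) : z ∉ spectrum ℂ x := by
  have hxu : x * u = x := (hid x (x_mem_Bset x)).2
  have hux : u * x = x := (hid x (x_mem_Bset x)).1
  have hu2 : u * u = u := (hid u huB).1
  have hgl : (x - (0:ℂ) • u) * g = u := by rw [zero_smul, sub_zero]; exact hxg
  have hsmall : ‖z - 0‖ * ‖g‖ < 1 := by rwa [sub_zero]
  obtain ⟨g', hg'B, hg'l, hg'r⟩ := neumann_step x u huB hid 0 z g hgB hgl hsmall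
  set v : A := g' - z⁻¹ • ((1:A) - u) with hv
  have hzz : z * z⁻¹ = 1 := mul_inv_cancel₀ hz
  have hA1 : (x - z • u) * ((1:A) - u) = 0 := by
    have h : (x - z • u) * u = x - z • u := by rw [sub_mul, smul_mul_assoc, hxu, hu2]
    rw [mul_sub, mul_one, h, sub_self]
  have hA2 : ((1:A) - u) * (x - z • u) = 0 := by
    have h : u * (x - z • u) = x - z • u := by rw [mul_sub, hux, mul_smul_comm, hu2]
    rw [sub_mul, one_mul, h, sub_self]
  have hB1 : ((1:A) - u) * g' = 0 := by rw [sub_mul, one_mul, (hid g' hg'B).1, sub_self]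
  have hB2 : g' * ((1:A) - u) = 0 := by rw [mul_sub, mul_one, (hid g' hg'B).2, sub_self]
  have hPP : ((1:A) - u) * ((1:A) - u) = (1:A) - u := by
    rw [mul_sub, mul_one, sub_mul, one_mul, hu2]
    abel
  have hsplit : x - z • (1:A) = (x - z • u) - z • ((1:A) - u) := by
    rw [smul_sub]
    abel
  have p1 : (x - z • u) * (z⁻¹ • ((1:A) - u)) = 0 := by rw [mul_smul_comm, hA1, smul_zero]
  have p2 : (z • ((1:A) - u)) * g' = 0 := by rw [smul_mul_assoc, hB1, smul_zero]
  have p3 : (z • ((1:A) - u)) * (z⁻¹ • ((1:A) - u)) = (1:A) - u := by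
    rw [smul_mul_assoc, mul_smul_comm, smul_smul, hzz, one_smul, hPP]
  have hl : (x - z • (1:A)) * v = 1 := by
    rw [hsplit, hv, sub_mul, mul_sub, mul_sub, hg'l, p1, p2, p3, sub_zero, zero_sub,
      sub_neg_eq_add]
    abel
  have q1 : (z⁻¹ • ((1:A) - u)) * (x - z • u) = 0 := by rw [smul_mul_assoc, hA2, smul_zero]
  have q2 : g' * (z • ((1:A) - u)) = 0 := by rw [mul_smul_comm, hB2, smul_zero]
  have q3 : (z⁻¹ • ((1:A) - u)) * (z • ((1:A) - u)) = (1:A) - u := by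
    rw [smul_mul_assoc, mul_smul_comm, smul_smul, inv_mul_cancel₀ hz, one_smul, hPP]
  have hr : v * (x - z • (1:A)) = 1 := by
    rw [hsplit, hv, mul_sub, sub_mul, sub_mul, hg'r, q1, q2, q3, sub_zero, zero_sub,
      sub_neg_eq_add]
    abel
  rw [spectrum.notMem_iff]
  have halg : algebraMap ℂ A z - x = -(x - z • (1:A)) := by
    rw [Algebra.algebraMap_eq_smul_one]
    abel
  rw [halg]
  exact IsUnit.neg ⟨⟨x - z • (1:A), v, hl, hr⟩, rfl⟩

lemma iii_spectral (y : A) (hy : x * y * x = x) :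
    ∃ ε > (0:ℝ), ∀ z ∈ spectrum ℂ x, z ≠ 0 → ε ≤ ‖z‖ := by
  obtain ⟨u, g, huB, hgB, hid, hxg, hgx⟩ := iii_to_iv x hacc y hy
  refine ⟨1/(‖g‖+1), by positivity, ?_⟩
  intro z hz hz0
  by_contra hcon
  push_neg at hcon
  have hzg : ‖z‖ * ‖g‖ < 1 := by
    have h1 : ‖z‖ * (‖g‖+1) < (1/(‖g‖+1)) * (‖g‖+1) :=
      mul_lt_mul_of_pos_right hcon (by positivity)
    have h2 : (1/(‖g‖+1)) * (‖g‖+1) = 1 := by field_simp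
    nlinarith [norm_nonneg z, norm_nonneg g]
  exact (spectral_gap x u g huB hgB hid hxg hgx z hz0 hzg) hz

end WithAcc

end Acc15

/-- Let `A` be a unital Banach algebra and `x ∈ A` accretive.  The
following are equivalent: (i) `xA` is norm closed; (ii) `Ax` is norm closed; (iii) `x` is
pseudo-invertible in `A` (there is `y` with `xyx = x`); (iv) `x` is invertible in the
closed subalgebra generated by `x`.  Moreover these imply that `0` is isolated in, or
absent from, the spectrum of `x`. -/
theorem accretive_range_closed_tfae
    {A : Type*} [NormedRing A] [NormedAlgebra ℂ A] [NormOneClass A] [CompleteSpace A]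
    (x : A)
    (hacc : ∀ φ : StrongDual ℂ A, ‖φ‖ = 1 → φ 1 = 1 → 0 ≤ (φ x).re) :
    ([IsClosed {w : A | ∃ a : A, w = x * a},
      IsClosed {w : A | ∃ a : A, w = a * x},
      (∃ y : A, x * y * x = x),
      (∃ u y : A,
        u ∈ closure ((NonUnitalAlgebra.adjoin ℂ {x} : NonUnitalSubalgebra ℂ A) : Set A) ∧
        y ∈ closure ((NonUnitalAlgebra.adjoin ℂ {x} : NonUnitalSubalgebra ℂ A) : Set A) ∧
        (∀ b ∈ closure ((NonUnitalAlgebra.adjoin ℂ {x} : NonUnitalSubalgebra ℂ A) : Set A),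
          u * b = b ∧ b * u = b) ∧
        x * y = u ∧ y * x = u)].TFAE) ∧
    ((∃ y : A, x * y * x = x) →
      ((0 : ℂ) ∉ spectrum ℂ x ∨
        ∃ ε > (0 : ℝ), ∀ z ∈ spectrum ℂ x, z ≠ 0 → ε ≤ ‖z‖)) := by
  constructor
  · tfae_have 1 → 3 := by
      intro h1
      obtain ⟨u, huB, ⟨a, ha⟩, hxu, hux⟩ := Acc15.build_u_left x hacc h1
      exact ⟨a, by rw [← ha]; exact hux⟩
    tfae_have 2 → 3 := by
      intro h2
      obtain ⟨u, huB, ⟨a, ha⟩, hxu, hux⟩ := Acc15.build_u_right x hacc h2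
      exact ⟨a, by rw [mul_assoc, ← ha]; exact hxu⟩
    tfae_have 3 → 1 := by
      rintro ⟨y, hy⟩
      exact Acc15.iii_to_i x y hy
    tfae_have 3 → 2 := by
      rintro ⟨y, hy⟩
      exact Acc15.iii_to_ii x y hy
    tfae_have 3 → 4 := by
      rintro ⟨y, hy⟩
      obtain ⟨u, g, huB, hgB, hid, hxg, hgx⟩ := Acc15.iii_to_iv x hacc y hy
      exact ⟨u, g, huB, hgB, hid, hxg, hgx⟩
    tfae_have 4 → 3 := by
      rintro ⟨u, y, huB, hyB, hid, hxy, hyx⟩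
      refine ⟨y, ?_⟩
      rw [hxy]
      exact (hid x (Acc15.x_mem_Bset x)).1
    tfae_finish
  · rintro ⟨y, hy⟩
    right
    exact Acc15.iii_spectral x hacc y hy
end

section
/- Let A be a commutative unital Banach algebra and x, y ∈ A with ‖1 − x‖ ≤ 1 and ‖1 − y‖ ≤ 1. Then the closure of xA + yA equals the closure of ((x+y)/2)A. -/
open Finset Filter Topology

lemma aux_cB_sq (m : ℕ) : (2*m+1) * (Nat.centralBinom m)^2 ≤ 16^m := by
  induction m with
  | zero => simp [Nat.centralBinom]
  | succ k ih =>
    have h := Nat.succ_mul_centralBinom_succ k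
    have hpos : 0 < (k+1)^2 := by positivity
    refine Nat.le_of_mul_le_mul_left ?_ hpos
    have e : (k+1)^2 * ((2*(k+1)+1) * Nat.centralBinom (k+1)^2)
        = (2*k+3) * ((k+1) * Nat.centralBinom (k+1))^2 := by ring
    rw [e, h]
    have : (2*k+3) * (2*(2*k+1)*Nat.centralBinom k)^2
        = (2*k+3)*(2*k+1)*4 * ((2*k+1) * Nat.centralBinom k^2) := by ring
    rw [this]
    calc (2*k+3)*(2*k+1)*4 * ((2*k+1) * Nat.centralBinom k^2)
        ≤ (2*k+3)*(2*k+1)*4 * 16^k := Nat.mul_le_mul_left _ ih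
      _ ≤ (k+1)^2*16 * 16^k := by
          have : (2*k+3)*(2*k+1)*4 ≤ (k+1)^2*16 := by nlinarith
          exact Nat.mul_le_mul_right _ this
      _ = (k+1)^2 * 16^(k+1) := by ring

lemma aux_middle_sq (n : ℕ) : (n+1) * (n.choose (n/2))^2 ≤ 2 * 4^n := by
  rcases Nat.even_or_odd n with ⟨m, rfl⟩ | ⟨m, rfl⟩
  · have hm : (m + m) / 2 = m := by omega
    rw [hm]
    have : (m+m).choose m = Nat.centralBinom m := by rw [Nat.centralBinom]; ring_nf
    rw [this]
    have h16 : (16:ℕ)^m = 4^(m+m) := by rw [show m+m = 2*m by ring, pow_mul]; norm_num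
    calc (m+m+1) * Nat.centralBinom m^2 = (2*m+1) * Nat.centralBinom m ^2 := by ring_nf
      _ ≤ 16^m := aux_cB_sq m
      _ ≤ 2 * 4^(m+m) := by rw [← h16]; omega
  · have hm : (2*m + 1) / 2 = m := by omega
    rw [hm]
    -- 2 * choose (2m+1) m = centralBinom (m+1)
    have hsymm : (2*m+1).choose (m+1) = (2*m+1).choose m := by
      rw [← Nat.choose_symm (by omega : m + 1 ≤ 2*m+1)]
      congr 1; omega
    have hpas : Nat.centralBinom (m+1) = 2 * (2*m+1).choose m := by
      rw [Nat.centralBinom, show 2*(m+1) = (2*m+1)+1 by ring, Nat.choose_succ_succ, hsymm]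
      ring
    have h1 := aux_cB_sq (m+1)
    rw [hpas] at h1
    -- (2(m+1)+1) * 4 * C^2 ≤ 16^(m+1)
    have h2 : (2*m+2) * (2*m+1).choose m ^2 * 4 ≤ 16^(m+1) := by
      calc (2*m+2) * (2*m+1).choose m ^2 * 4 ≤ (2*(m+1)+1) * (2 * (2*m+1).choose m)^2 := by
            nlinarith [sq_nonneg ((2*m+1).choose m)]
        _ ≤ 16^(m+1) := h1
    have h16 : (16:ℕ)^(m+1) = 4^(2*m+1) * 4 := by
      rw [show (16:ℕ) = 4^2 by norm_num, ← pow_mul]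
      rw [show 2*(m+1) = (2*m+1)+1 by ring, pow_succ]
    rw [h16] at h2
    have h3 : (2*m+2) * (2*m+1).choose m ^2 ≤ 4^(2*m+1) :=
      Nat.le_of_mul_le_mul_right h2 (by norm_num)
    calc (2*m+1+1) * (2*m+1).choose m ^2 = (2*m+2) * (2*m+1).choose m ^2 := by ring_nf
      _ ≤ 4^(2*m+1) := h3
      _ ≤ 2 * 4^(2*m+1) := Nat.le_mul_of_pos_left _ (by norm_num)

lemma aux_choose_anti (n j : ℕ) (h : n/2 ≤ j) : n.choose (j+1) ≤ n.choose j := by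
  rcases le_or_gt n j with hnj | hnj
  · rw [Nat.choose_eq_zero_of_lt (by omega)]; exact Nat.zero_le _
  · have e := Nat.choose_succ_right_eq n j
    have h1 : n - j ≤ j + 1 := by omega
    have h2 : n.choose (j+1) * (j+1) ≤ n.choose j * (j+1) := by
      rw [e]; exact Nat.mul_le_mul_left _ h1
    exact Nat.le_of_mul_le_mul_right h2 (by omega)

lemma aux_choose_mono (n j : ℕ) (h : j < n/2) : n.choose j ≤ n.choose (j+1) := by
  have e := Nat.choose_succ_right_eq n j
  have h1 : j + 1 ≤ n - j := by omega
  have h2 : n.choose j * (j+1) ≤ n.choose (j+1) * (j+1) := by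
    rw [e]; exact Nat.mul_le_mul_left _ h1
  exact Nat.le_of_mul_le_mul_right h2 (by omega)

lemma aux_abs_diff_sum (n : ℕ) :
    ∑ j ∈ range n, |((n.choose (j+1) : ℝ)) - n.choose j| ≤ 2 * n.choose (n/2) - 2 := by
  set k := n/2 with hk
  have hkn : k ≤ n := Nat.div_le_self n 2
  rw [← sum_range_add_sum_Ico _ hkn]
  have e1 : ∑ j ∈ range k, |((n.choose (j+1) : ℝ)) - n.choose j|
      = (n.choose k : ℝ) - n.choose 0 := by
    rw [← sum_range_sub (fun j => (n.choose j : ℝ)) k]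
    apply sum_congr rfl
    intro j hj
    rw [abs_of_nonneg]
    simp only [sub_nonneg, Nat.cast_le]
    exact aux_choose_mono n j (mem_range.mp hj)
  have e2 : ∑ j ∈ Ico k n, |((n.choose (j+1) : ℝ)) - n.choose j|
      = (n.choose k : ℝ) - n.choose n := by
    have e3 : ∀ j ∈ Ico k n, |((n.choose (j+1) : ℝ)) - n.choose j|
        = (n.choose j : ℝ) - n.choose (j+1) := by
      intro j hj
      rw [abs_of_nonpos, neg_sub]
      simp only [sub_nonpos, Nat.cast_le]
      exact aux_choose_anti n j (mem_Ico.mp hj).1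
    rw [sum_congr rfl e3, sum_Ico_eq_sum_range]
    have t := sum_range_sub' (fun i => (n.choose (k+i) : ℝ)) (n - k)
    simp only [← add_assoc] at t
    rw [t]
    have hkk : k + (n - k) = n := by omega
    rw [hkk]
    norm_num
  rw [e1, e2]
  simp only [Nat.choose_zero_right, Nat.choose_self, Nat.cast_one]
  ring_nf
  norm_num

lemma aux_key_identity {A : Type*} [CommRing A] (z w : A) (n : ℕ) :
    (z + w)^n * (z - w) =
      z^(n+1) - w^(n+1) +
        ∑ j ∈ range n, ((((n.choose j : ℤ) - (n.choose (j+1) : ℤ)) : ℤ) : A) * (z^(j+1) * w^(n-j)) := by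
  rw [add_pow, sum_mul]
  have expand : ∀ k ∈ range (n+1),
      z ^ k * w ^ (n - k) * (n.choose k : A) * (z - w)
        = (n.choose k : A) * (z^(k+1) * w^(n-k)) - (n.choose k : A) * (z^k * w^(n-k+1)) := by
    intro k hk; ring
  rw [sum_congr rfl expand, sum_sub_distrib]
  have h1 : ∑ k ∈ range (n+1), (n.choose k : A) * (z^(k+1) * w^(n-k))
      = (∑ k ∈ range n, (n.choose k : A) * (z^(k+1) * w^(n-k))) + z^(n+1) := by
    rw [sum_range_succ]; simp
  have h2 : ∑ k ∈ range (n+1), (n.choose k : A) * (z^k * w^(n-k+1))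
      = (∑ k ∈ range n, (n.choose (k+1) : A) * (z^(k+1) * w^(n-k))) + w^(n+1) := by
    rw [sum_range_succ']
    simp only [Nat.choose_zero_right, Nat.cast_one, pow_zero, one_mul, Nat.sub_zero]
    congr 1
    apply sum_congr rfl
    intro k hk
    have hnk : n - (k+1) + 1 = n - k := by have := mem_range.mp hk; omega
    rw [hnk]
  rw [h1, h2]
  have h3 : ∑ j ∈ range n, ((((n.choose j : ℤ) - (n.choose (j+1) : ℤ)) : ℤ) : A) * (z^(j+1) * w^(n-j))
      = ∑ j ∈ range n, ((n.choose j : A) * (z^(j+1) * w^(n-j))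
          - (n.choose (j+1) : A) * (z^(j+1) * w^(n-j))) := by
    apply sum_congr rfl
    intro j hj
    push_cast
    ring
  rw [h3, sum_sub_distrib]
  ring

lemma aux_norm_bound {A : Type*} [NormedCommRing A] [NormOneClass A] (z w : A)
    (hz : ‖z‖ ≤ 1) (hw : ‖w‖ ≤ 1) (n : ℕ) :
    ‖(z + w)^n * (z - w)‖ ≤ 2 * n.choose (n/2) := by
  rw [aux_key_identity]
  have hzp : ∀ m, ‖z^m‖ ≤ 1 := fun m =>
    (norm_pow_le z m).trans (pow_le_one₀ (norm_nonneg z) hz)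
  have hwp : ∀ m, ‖w^m‖ ≤ 1 := fun m =>
    (norm_pow_le w m).trans (pow_le_one₀ (norm_nonneg w) hw)
  have hterm : ∀ j ∈ range n,
      ‖((((n.choose j : ℤ) - (n.choose (j+1) : ℤ)) : ℤ) : A) * (z^(j+1) * w^(n-j))‖
        ≤ |((n.choose (j+1) : ℝ)) - n.choose j| := by
    intro j hj
    calc ‖((((n.choose j : ℤ) - (n.choose (j+1) : ℤ)) : ℤ) : A) * (z^(j+1) * w^(n-j))‖
        ≤ ‖((((n.choose j : ℤ) - (n.choose (j+1) : ℤ)) : ℤ) : A)‖ * ‖z^(j+1) * w^(n-j)‖ :=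
          norm_mul_le _ _
      _ ≤ ‖((((n.choose j : ℤ) - (n.choose (j+1) : ℤ)) : ℤ) : A)‖ * 1 := by
          apply mul_le_mul_of_nonneg_left _ (norm_nonneg _)
          calc ‖z^(j+1) * w^(n-j)‖ ≤ ‖z^(j+1)‖ * ‖w^(n-j)‖ := norm_mul_le _ _
            _ ≤ 1 * 1 := mul_le_mul (hzp _) (hwp _) (norm_nonneg _) zero_le_one
            _ = 1 := one_mul 1
      _ = ‖((((n.choose j : ℤ) - (n.choose (j+1) : ℤ)) : ℤ) : A)‖ := mul_one _
      _ ≤ |((n.choose (j+1) : ℝ)) - n.choose j| := by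
          set m : ℤ := (n.choose j : ℤ) - (n.choose (j+1) : ℤ) with hm
          have e1 : ((m : ℤ) : A) = m • (1:A) := by simp [zsmul_eq_mul]
          have e2 : |((n.choose (j+1) : ℝ)) - n.choose j| = |(m:ℝ)| := by
            rw [hm]; push_cast; rw [abs_sub_comm]
          rw [e1, e2]
          calc ‖m • (1:A)‖ ≤ ‖m‖ * ‖(1:A)‖ := norm_zsmul_le m (1:A)
            _ = |(m:ℝ)| := by rw [norm_one, mul_one, Int.norm_eq_abs]
  calc ‖z^(n+1) - w^(n+1) + ∑ j ∈ range n, ((((n.choose j : ℤ) - (n.choose (j+1) : ℤ)) : ℤ) : A) * (z^(j+1) * w^(n-j))‖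
      ≤ ‖z^(n+1) - w^(n+1)‖ + ‖∑ j ∈ range n, ((((n.choose j : ℤ) - (n.choose (j+1) : ℤ)) : ℤ) : A) * (z^(j+1) * w^(n-j))‖ :=
        norm_add_le _ _
    _ ≤ (‖z^(n+1)‖ + ‖w^(n+1)‖) + ∑ j ∈ range n, |((n.choose (j+1) : ℝ)) - n.choose j| := by
        gcongr
        · exact norm_sub_le _ _
        · exact (norm_sum_le _ _).trans (sum_le_sum hterm)
    _ ≤ (1 + 1) + (2 * n.choose (n/2) - 2) := by
        gcongr
        · exact hzp _
        · exact hwp _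
        · exact aux_abs_diff_sum n
    _ = 2 * n.choose (n/2) := by ring

lemma aux_tendsto {A : Type*} [NormedCommRing A] [NormedAlgebra ℂ A] [NormOneClass A]
    (z w : A) (hz : ‖z‖ ≤ 1) (hw : ‖w‖ ≤ 1) :
    Tendsto (fun n : ℕ => ‖((1/2:ℝ) • (z + w))^n * (z - w)‖) atTop (𝓝 0) := by
  have hbound : ∀ n : ℕ, ‖((1/2:ℝ) • (z + w))^n * (z - w)‖ ≤ Real.sqrt (8 / (n+1)) := by
    intro n
    have h1 : ((1/2:ℝ) • (z + w))^n * (z - w) = ((1/2:ℝ)^n) • ((z + w)^n * (z - w)) := by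
      rw [smul_pow, smul_mul_assoc]
    rw [h1, norm_smul, Real.norm_eq_abs, abs_of_nonneg (by positivity)]
    have h2 : ((1/2:ℝ))^n * ‖(z + w)^n * (z - w)‖ ≤ ((1/2:ℝ))^n * (2 * n.choose (n/2)) := by
      apply mul_le_mul_of_nonneg_left (aux_norm_bound z w hz hw n) (by positivity)
    refine h2.trans ?_
    rw [Real.le_sqrt (by positivity)]
    have hc : ((n:ℝ)+1) * ((n.choose (n/2) : ℝ))^2 ≤ 2 * 4^n := by
      exact_mod_cast aux_middle_sq n
    have h4 : (((1:ℝ)/2)^n)^2 * 4^n = 1 := by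
      rw [← pow_mul, mul_comm n 2, pow_mul, ← mul_pow]
      norm_num
    have hpos2 : (0:ℝ) < (n:ℝ)+1 := by positivity
    rw [le_div_iff₀ hpos2]
    nlinarith [mul_le_mul_of_nonneg_left hc (sq_nonneg (((1:ℝ)/2)^n)), h4,
      sq_nonneg (((1:ℝ)/2)^n)]
    positivity
  have h0 : Tendsto (fun n : ℕ => (8:ℝ) / (n+1)) atTop (𝓝 0) := by
    have := tendsto_one_div_add_atTop_nhds_zero_nat.const_mul (8:ℝ)
    rw [mul_zero] at this
    convert this using 2 with n
    rw [mul_one_div]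
  have hs := (Real.continuous_sqrt.tendsto 0).comp h0
  rw [Real.sqrt_zero] at hs
  exact squeeze_zero (fun n => norm_nonneg _) hbound hs

/-- Let `A` be a commutative unital Banach algebra and `x, y ∈ A` with
`‖1 − x‖ ≤ 1` and `‖1 − y‖ ≤ 1`.  Then the closure of `xA + yA` equals the closure of
`((x+y)/2)A`. -/
theorem closure_sum_ideals_eq_closure_average_ideal
    {A : Type*} [NormedCommRing A] [NormedAlgebra ℂ A] [NormOneClass A] [CompleteSpace A]
    (x y : A) (hx : ‖1 - x‖ ≤ 1) (hy : ‖1 - y‖ ≤ 1) :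
    closure {w : A | ∃ a b : A, w = x * a + y * b} =
      closure {w : A | ∃ a : A, w = ((1 / 2 : ℝ) • (x + y)) * a} := by
  set a : A := (1 / 2 : ℝ) • (x + y) with ha
  set I : Ideal A := Ideal.span {a} with hI
  set T : Ideal A := I.topologicalClosure with hT
  have hS2 : {w : A | ∃ c : A, w = a * c} = (I : Set A) := by
    ext u
    simp only [Set.mem_setOf_eq, SetLike.mem_coe, hI, Ideal.mem_span_singleton]
    constructor
    · rintro ⟨c, rfl⟩; exact ⟨c, rfl⟩
    · rintro ⟨c, rfl⟩; exact ⟨c, rfl⟩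
  have hclosT : closure (I : Set A) = (T : Set A) := (Submodule.topologicalClosure_coe I).symm
  have hb : (1:A) - a = (1/2:ℝ) • (((1:A) - x) + ((1:A) - y)) := by
    rw [ha]; module
  have hdz : ((1:A) - x) - ((1:A) - y) = y - x := by ring
  have hdT' : y - x ∈ closure (I : Set A) := by
    rw [mem_closure_iff_seq_limit]
    refine ⟨fun n => ((1:A) - ((1:A) - a)^n) * (y - x), ?_, ?_⟩
    · intro n
      have hgeo : (1:A) - ((1:A) - a)^n = a * (∑ k ∈ range n, ((1:A) - a)^k) := by
        have h := geom_sum_mul ((1:A) - a) n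
        linear_combination h
      show ((1:A) - ((1:A) - a)^n) * (y - x) ∈ (I : Set A)
      rw [hgeo, hI]
      exact Ideal.mem_span_singleton.mpr ⟨(∑ k ∈ range n, ((1:A) - a)^k) * (y - x), mul_assoc _ _ _⟩
    · rw [tendsto_iff_norm_sub_tendsto_zero]
      have he : ∀ n : ℕ, ‖((1:A) - ((1:A) - a)^n) * (y - x) - (y - x)‖
          = ‖((1/2:ℝ) • (((1:A) - x) + ((1:A) - y)))^n * (((1:A) - x) - ((1:A) - y))‖ := by
        intro n
        rw [← hb, hdz, show ((1:A) - ((1:A) - a)^n) * (y - x) - (y - x)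
          = -(((1:A) - a)^n * (y - x)) by ring, norm_neg]
      simp only [he]
      exact aux_tendsto _ _ hx hy
  have hdT : y - x ∈ T := by rw [hclosT] at hdT'; exact hdT'
  have haT : a ∈ T :=
    Submodule.le_topologicalClosure I (by rw [hI]; exact Ideal.mem_span_singleton.mpr ⟨1, (mul_one a).symm⟩)
  have hsmulT : ∀ (r : ℝ) (u : A), u ∈ T → r • u ∈ T := by
    intro r u hu
    have e : r • u = (r • (1:A)) * u := by rw [smul_mul_assoc, one_mul]
    rw [e, ← smul_eq_mul]
    exact T.smul_mem _ hu
  have hxT : x ∈ T := by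
    have e : x = a - (1/2:ℝ) • (y - x) := by rw [ha]; module
    rw [e]
    exact T.sub_mem haT (hsmulT _ _ hdT)
  have hyT : y ∈ T := by
    have e : y = a + (1/2:ℝ) • (y - x) := by rw [ha]; module
    rw [e]
    exact T.add_mem haT (hsmulT _ _ hdT)
  apply subset_antisymm
  · refine closure_minimal ?_ isClosed_closure
    rintro u ⟨c, d, rfl⟩
    have h1 : x * c ∈ T := by rw [mul_comm, ← smul_eq_mul]; exact T.smul_mem c hxT
    have h2 : y * d ∈ T := by rw [mul_comm, ← smul_eq_mul]; exact T.smul_mem d hyT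
    have hmem : x * c + y * d ∈ T := T.add_mem h1 h2
    have hsub : (T : Set A) ⊆ closure {w : A | ∃ c : A, w = a * c} := by
      rw [hS2, hclosT]
    exact hsub hmem
  · apply closure_mono
    rintro u ⟨c, rfl⟩
    exact ⟨(1/2:ℝ) • c, (1/2:ℝ) • c, by
      rw [smul_mul_assoc, mul_smul_comm, mul_smul_comm, ← smul_add, add_mul]⟩
end

section
/- Let A be a commutative unital Banach algebra and (x_k) a sequence in A with ‖1 − x_k‖ ≤ 1 for all k. Set z = Σ_{k=1}^∞ 2^{-k} x_k. Then ‖1 − z‖ ≤ 1 and the closure of Σ_k x_k A equals the closure of zA. -/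
open Filter Finset Topology


private lemma centralBinom_sq_le (m : ℕ) :
    (Nat.centralBinom m)^2 * (2*m+1) ≤ 16^m := by
  induction m with
  | zero => simp [Nat.centralBinom]
  | succ m ih =>
    have key := Nat.succ_mul_centralBinom_succ m
    have hmain : (m+1)^2 * ((Nat.centralBinom (m+1))^2 * (2*(m+1)+1))
        ≤ (m+1)^2 * 16^(m+1) := by
      have h1 : (m+1)^2 * ((Nat.centralBinom (m+1))^2 * (2*(m+1)+1))
          = ((m+1) * Nat.centralBinom (m+1))^2 * (2*m+3) := by ring
      rw [h1, key]
      have h2 : (2 * (2*m+1) * Nat.centralBinom m)^2 * (2*m+3)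
          = ((Nat.centralBinom m)^2 * (2*m+1)) * (4*(2*m+1)*(2*m+3)) := by ring
      rw [h2]
      calc ((Nat.centralBinom m)^2 * (2*m+1)) * (4*(2*m+1)*(2*m+3))
          ≤ 16^m * (4*(2*m+1)*(2*m+3)) := Nat.mul_le_mul_right _ ih
        _ ≤ 16^m * (4*(2*m+2)^2) := by
            apply Nat.mul_le_mul_left
            have hx : (2*m+1)*(2*m+3) ≤ (2*m+2)^2 := by nlinarith
            calc 4*(2*m+1)*(2*m+3) = 4*((2*m+1)*(2*m+3)) := by ring
              _ ≤ 4*((2*m+2)^2) := Nat.mul_le_mul_left _ hx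
              _ = 4*(2*m+2)^2 := by ring
        _ = (m+1)^2 * 16^(m+1) := by ring
    exact Nat.le_of_mul_le_mul_left hmain (by positivity)

private lemma choose_half_sq_le (k : ℕ) :
    (Nat.choose k (k/2))^2 * (k+1) ≤ 4^k := by
  rcases Nat.even_or_odd k with ⟨m, hm⟩ | ⟨m, hm⟩
  · subst hm
    have h : (m+m)/2 = m := by omega
    rw [h]
    have hcb := centralBinom_sq_le m
    have h16 : (16:ℕ)^m = 4^(m+m) := by
      rw [show (16:ℕ) = 4^2 by norm_num, ← pow_mul]; ring_nf
    rw [h16] at hcb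
    have hdef : Nat.centralBinom m = Nat.choose (m+m) m := by
      unfold Nat.centralBinom; congr 1; ring
    rw [hdef] at hcb
    have hmm : m+m+1 = 2*m+1 := by ring
    rw [hmm]
    exact hcb
  · subst hm
    have h : (2*m+1)/2 = m := by omega
    rw [h]
    -- 2 * C(2m+1, m) = centralBinom (m+1)
    have hsymm : Nat.choose (2*m+1) (m+1) = Nat.choose (2*m+1) m := by
      have := Nat.choose_symm (n := 2*m+1) (k := m+1) (by omega)
      have h2 : 2*m+1 - (m+1) = m := by omega
      rw [h2] at this
      exact this.symm
    have hdouble : Nat.centralBinom (m+1) = 2 * Nat.choose (2*m+1) m := by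
      unfold Nat.centralBinom
      have h3 : 2*(m+1) = (2*m+1) + 1 := by ring
      rw [h3, Nat.choose_succ_succ]
      rw [hsymm]
      omega
    have hcb := centralBinom_sq_le (m+1)
    rw [hdouble] at hcb
    have h16 : (16:ℕ)^(m+1) = 4 * 4^(2*m+1) := by
      rw [show (16:ℕ) = 4^2 by norm_num, ← pow_mul]
      rw [show 2*(m+1) = (2*m+1)+1 by ring, pow_succ]
      ring
    rw [h16] at hcb
    have hexp : (2 * Nat.choose (2*m+1) m)^2 * (2*(m+1)+1)
        = 4 * ((Nat.choose (2*m+1) m)^2 * (2*m+3)) := by ring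
    rw [hexp] at hcb
    have h4 : (Nat.choose (2*m+1) m)^2 * (2*m+3) ≤ 4^(2*m+1) :=
      Nat.le_of_mul_le_mul_left hcb (by norm_num)
    calc (Nat.choose (2*m+1) m)^2 * (2*m+1+1)
        ≤ (Nat.choose (2*m+1) m)^2 * (2*m+3) := by
          apply Nat.mul_le_mul_left; omega
      _ ≤ 4^(2*m+1) := h4

private lemma tendsto_choose_half_div :
    Tendsto (fun k : ℕ => (Nat.choose k (k/2) : ℝ) / 2^k) atTop (𝓝 0) := by
  have hbd : ∀ k : ℕ, ((Nat.choose k (k/2) : ℝ) / 2^k)^2 ≤ 1/((k:ℝ)+1) := by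
    intro k
    have h := choose_half_sq_le k
    have hcast : ((Nat.choose k (k/2) : ℝ))^2 * ((k:ℝ)+1) ≤ 4^k := by
      exact_mod_cast h
    have h2 : ((2:ℝ)^k)^2 = 4^k := by
      rw [← pow_mul, show (4:ℝ) = 2^2 by norm_num, ← pow_mul]; ring_nf
    rw [div_pow, h2, div_le_div_iff₀ (by positivity) (by positivity)]
    nlinarith [pow_pos (show (0:ℝ) < 4 by norm_num) k]
  have hsq : Tendsto (fun k : ℕ => ((Nat.choose k (k/2) : ℝ) / 2^k)^2) atTop (𝓝 0) := by
    apply squeeze_zero (fun k => by positivity) hbd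
    exact tendsto_one_div_add_atTop_nhds_zero_nat
  have := (Real.continuous_sqrt.continuousAt (x := (0:ℝ))).tendsto.comp hsq
  rw [Real.sqrt_zero] at this
  apply this.congr
  intro k
  simp only [Function.comp_apply]
  exact Real.sqrt_sq (by positivity)


private lemma norm_pow_le_one {A : Type*} [NormedRing A] [NormOneClass A]
    (a : A) (ha : ‖a‖ ≤ 1) : ∀ i, ‖a^i‖ ≤ 1
  | 0 => by simp
  | (i+1) => by
      calc ‖a^(i+1)‖ = ‖a^i * a‖ := by rw [pow_succ]
        _ ≤ ‖a^i‖ * ‖a‖ := norm_mul_le _ _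
        _ ≤ 1 * 1 := mul_le_mul (norm_pow_le_one a ha i) ha (norm_nonneg _) zero_le_one
        _ = 1 := by ring

private lemma key_norm_bound {A : Type*} [NormedCommRing A] [NormedAlgebra ℂ A]
    [NormOneClass A] (u v : A) (hu : ‖u‖ ≤ 1) (hv : ‖v‖ ≤ 1) (k : ℕ) :
    ‖(u - v) * (u + v)^k‖ ≤ 2 * (Nat.choose k (k/2) : ℝ) := by
  set c : ℕ → ℕ := Nat.choose k with hc
  set T : ℕ → A := fun i => u^i * v^(k+1-i) with hT
  have hTnorm : ∀ i, ‖T i‖ ≤ 1 := by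
    intro i
    calc ‖u^i * v^(k+1-i)‖ ≤ ‖u^i‖ * ‖v^(k+1-i)‖ := norm_mul_le _ _
      _ ≤ 1 * 1 := mul_le_mul (norm_pow_le_one u hu i) (norm_pow_le_one v hv _)
            (norm_nonneg _) zero_le_one
      _ = 1 := by ring
  set m : ℕ := (k+1)/2 with hm
  have hmk : m ≤ k := by omega
  -- monotonicity
  have hinc : ∀ i, i < m → c i ≤ c (i+1) := by
    intro i hi
    rcases lt_or_ge i (k/2) with h | h
    · exact Nat.choose_le_succ_of_lt_half_left h
    · -- forces k odd, k = 2i+1, equality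
      have hk : k = 2*i+1 := by omega
      subst hk
      have := Nat.choose_symm (n := 2*i+1) (k := i+1) (by omega)
      have h2 : 2*i+1 - (i+1) = i := by omega
      rw [h2] at this
      exact le_of_eq this
  have hdec : ∀ j, m ≤ j → j < k → c (j+1) ≤ c j := by
    intro j hj hjk
    have e1 : c (j+1) = Nat.choose k (k-(j+1)) :=
      (Nat.choose_symm (by omega)).symm
    have e2 : c j = Nat.choose k (k-j) := (Nat.choose_symm (by omega)).symm
    rw [e1, e2]
    have h3 : k - j = (k-(j+1)) + 1 := by omega
    rw [h3]
    exact Nat.choose_le_succ_of_lt_half_left (by omega)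
  have hcm : c m = Nat.choose k (k/2) := by
    rcases Nat.even_or_odd k with ⟨t, ht⟩ | ⟨t, ht⟩
    · have : m = k/2 := by omega
      rw [this]
    · have h1 : k - m = k/2 := by omega
      rw [← h1]
      exact (Nat.choose_symm hmk).symm
  -- expansion
  have expand : (u - v) * (u + v)^k
      = (∑ j ∈ range (k+1), (c j : ℝ) • T (j+1))
        - ∑ j ∈ range (k+1), (c j : ℝ) • T j := by
    rw [sub_mul, add_pow]
    congr 1
    · rw [Finset.mul_sum]
      apply Finset.sum_congr rfl
      intro j hj
      have hjk : j ≤ k := by simpa using Nat.lt_succ_iff.mp (Finset.mem_range.mp hj)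
      have hexp : k+1-(j+1) = k-j := by omega
      rw [hT]
      simp only [hexp]
      rw [Nat.cast_smul_eq_nsmul, nsmul_eq_mul]
      ring
    · rw [Finset.mul_sum]
      apply Finset.sum_congr rfl
      intro j hj
      have hjk : j ≤ k := by simpa using Nat.lt_succ_iff.mp (Finset.mem_range.mp hj)
      have hexp : k+1-j = (k-j)+1 := by omega
      rw [hT]
      simp only [hexp]
      rw [Nat.cast_smul_eq_nsmul, nsmul_eq_mul]
      ring
  -- split the sums at m
  have hsplit1 : (∑ j ∈ range (k+1), (c j : ℝ) • T (j+1))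
      = (∑ j ∈ range m, (c j : ℝ) • T (j+1))
        + ∑ j ∈ Ico m (k+1), (c j : ℝ) • T (j+1) := by
    rw [Finset.range_eq_Ico, ← Finset.sum_Ico_consecutive _ (Nat.zero_le m) (by omega),
      ← Finset.range_eq_Ico]
  have hsplit2 : (∑ j ∈ range (k+1), (c j : ℝ) • T j)
      = (∑ j ∈ range (m+1), (c j : ℝ) • T j)
        + ∑ j ∈ Ico (m+1) (k+1), (c j : ℝ) • T j := by
    rw [Finset.range_eq_Ico, ← Finset.sum_Ico_consecutive _ (Nat.zero_le (m+1)) (by omega),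
      ← Finset.range_eq_Ico]
  rw [expand, hsplit1, hsplit2]
  have hrearr : (∑ j ∈ range m, (c j : ℝ) • T (j+1)) + (∑ j ∈ Ico m (k+1), (c j : ℝ) • T (j+1))
      - ((∑ j ∈ range (m+1), (c j : ℝ) • T j) + ∑ j ∈ Ico (m+1) (k+1), (c j : ℝ) • T j)
      = ((∑ j ∈ range m, (c j : ℝ) • T (j+1)) - ∑ j ∈ range (m+1), (c j : ℝ) • T j)
        + ((∑ j ∈ Ico m (k+1), (c j : ℝ) • T (j+1)) - ∑ j ∈ Ico (m+1) (k+1), (c j : ℝ) • T j) := by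
    abel
  rw [hrearr]
  have hlow : ‖(∑ j ∈ range m, (c j : ℝ) • T (j+1)) - ∑ j ∈ range (m+1), (c j : ℝ) • T j‖
      ≤ (c m : ℝ) := by
    have hre : (∑ j ∈ range (m+1), (c j : ℝ) • T j)
        = (∑ j ∈ range m, (c (j+1) : ℝ) • T (j+1)) + (c 0 : ℝ) • T 0 :=
      Finset.sum_range_succ' _ m
    rw [hre]
    have hcomb : (∑ j ∈ range m, (c j : ℝ) • T (j+1))
        - ((∑ j ∈ range m, (c (j+1) : ℝ) • T (j+1)) + (c 0 : ℝ) • T 0)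
        = -((∑ j ∈ range m, ((c (j+1) : ℝ) - c j) • T (j+1)) + (c 0 : ℝ) • T 0) := by
      simp only [sub_smul]
      rw [Finset.sum_sub_distrib]
      abel
    rw [hcomb, norm_neg]
    calc ‖(∑ j ∈ range m, ((c (j+1) : ℝ) - c j) • T (j+1)) + (c 0 : ℝ) • T 0‖
        ≤ ‖∑ j ∈ range m, ((c (j+1) : ℝ) - c j) • T (j+1)‖ + ‖(c 0 : ℝ) • T 0‖ :=
          norm_add_le _ _
      _ ≤ (∑ j ∈ range m, ((c (j+1) : ℝ) - c j)) + (c 0 : ℝ) := by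
          gcongr
          · calc ‖∑ j ∈ range m, ((c (j+1) : ℝ) - c j) • T (j+1)‖
                ≤ ∑ j ∈ range m, ‖((c (j+1) : ℝ) - c j) • T (j+1)‖ := norm_sum_le _ _
              _ ≤ ∑ j ∈ range m, ((c (j+1) : ℝ) - c j) := by
                  apply Finset.sum_le_sum
                  intro j hj
                  rw [norm_smul]
                  have hnn : (0:ℝ) ≤ (c (j+1) : ℝ) - c j := by
                    have h' := hinc j (Finset.mem_range.mp hj)
                    have h'' : (c j : ℝ) ≤ c (j+1) := by exact_mod_cast h'
                    linarith
                  rw [Real.norm_eq_abs, abs_of_nonneg hnn]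
                  nlinarith [hTnorm (j+1), norm_nonneg (T (j+1))]
          · rw [norm_smul, Real.norm_eq_abs, abs_of_nonneg (by positivity)]
            nlinarith [hTnorm 0, norm_nonneg (T 0)]
      _ = (c m : ℝ) := by
          rw [Finset.sum_range_sub (fun i => (c i : ℝ))]
          ring
  have hhigh : ‖(∑ j ∈ Ico m (k+1), (c j : ℝ) • T (j+1)) - ∑ j ∈ Ico (m+1) (k+1), (c j : ℝ) • T j‖
      ≤ (c m : ℝ) := by
    set L : ℕ := k - m with hL
    have h1 : (∑ j ∈ Ico m (k+1), (c j : ℝ) • T (j+1))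
        = ∑ i ∈ range (L+1), (c (m+i) : ℝ) • T (m+i+1) := by
      rw [Finset.sum_Ico_eq_sum_range]
      have : k+1-m = L+1 := by omega
      rw [this]
    have h2 : (∑ j ∈ Ico (m+1) (k+1), (c j : ℝ) • T j)
        = ∑ i ∈ range L, (c (m+1+i) : ℝ) • T (m+1+i) := by
      rw [Finset.sum_Ico_eq_sum_range]
      have : k+1-(m+1) = L := by omega
      rw [this]
    rw [h1, h2, Finset.sum_range_succ]
    have hidx : ∀ i : ℕ, m+1+i = m+i+1 := by intro i; ring
    have h3 : (∑ i ∈ range L, (c (m+1+i) : ℝ) • T (m+1+i))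
        = ∑ i ∈ range L, (c (m+i+1) : ℝ) • T (m+i+1) := by
      apply Finset.sum_congr rfl; intro i _; rw [hidx i]
    rw [h3]
    have hcomb : (∑ i ∈ range L, (c (m+i) : ℝ) • T (m+i+1)) + (c (m+L) : ℝ) • T (m+L+1)
        - ∑ i ∈ range L, (c (m+i+1) : ℝ) • T (m+i+1)
        = (∑ i ∈ range L, ((c (m+i) : ℝ) - c (m+i+1)) • T (m+i+1)) + (c (m+L) : ℝ) • T (m+L+1) := by
      simp only [sub_smul]
      rw [Finset.sum_sub_distrib]
      abel
    rw [hcomb]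
    calc ‖(∑ i ∈ range L, ((c (m+i) : ℝ) - c (m+i+1)) • T (m+i+1)) + (c (m+L) : ℝ) • T (m+L+1)‖
        ≤ ‖∑ i ∈ range L, ((c (m+i) : ℝ) - c (m+i+1)) • T (m+i+1)‖
          + ‖(c (m+L) : ℝ) • T (m+L+1)‖ := norm_add_le _ _
      _ ≤ (∑ i ∈ range L, ((c (m+i) : ℝ) - c (m+i+1))) + (c (m+L) : ℝ) := by
          gcongr
          · calc ‖∑ i ∈ range L, ((c (m+i) : ℝ) - c (m+i+1)) • T (m+i+1)‖
                ≤ ∑ i ∈ range L, ‖((c (m+i) : ℝ) - c (m+i+1)) • T (m+i+1)‖ := norm_sum_le _ _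
              _ ≤ ∑ i ∈ range L, ((c (m+i) : ℝ) - c (m+i+1)) := by
                  apply Finset.sum_le_sum
                  intro i hi
                  rw [norm_smul]
                  have hmono := hdec (m+i) (by omega)
                    (by have := Finset.mem_range.mp hi; omega)
                  have hnn : (0:ℝ) ≤ (c (m+i) : ℝ) - c (m+i+1) := by
                    have h'' : (c (m+i+1) : ℝ) ≤ c (m+i) := by exact_mod_cast hmono
                    linarith
                  rw [Real.norm_eq_abs, abs_of_nonneg hnn]
                  nlinarith [hTnorm (m+i+1), norm_nonneg (T (m+i+1))]
          · rw [norm_smul, Real.norm_eq_abs, abs_of_nonneg (by positivity)]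
            nlinarith [hTnorm (m+L+1), norm_nonneg (T (m+L+1))]
      _ = (c m : ℝ) := by
          simp only [add_assoc]
          rw [Finset.sum_range_sub' (fun i => (c (m+i) : ℝ))]
          simp
  calc ‖_ + _‖ ≤ _ + _ := norm_add_le _ _
    _ ≤ (c m : ℝ) + (c m : ℝ) := add_le_add hlow hhigh
    _ = 2 * (Nat.choose k (k/2) : ℝ) := by rw [hcm]; ring


set_option linter.unusedSectionVars false
section Aux
variable {A : Type*} [NormedCommRing A] [NormedAlgebra ℂ A] [NormOneClass A]

private lemma norm_pow_le_one' (a : A) (ha : ‖a‖ ≤ 1) : ∀ i, ‖a^i‖ ≤ 1 := by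
  intro i; induction i with
  | zero => simp
  | succ n ih => calc ‖a^(n+1)‖ = ‖a^n * a‖ := by rw [pow_succ]
                   _ ≤ ‖a^n‖ * ‖a‖ := norm_mul_le _ _
                   _ ≤ 1 * 1 := mul_le_mul ih ha (norm_nonneg _) zero_le_one
                   _ = 1 := by ring


private lemma mem_closure_principal_of_avg (x y z : A)
    (hx : ‖1 - x‖ ≤ 1) (hy : ‖1 - y‖ ≤ 1) (hz : x + y = z + z) :
    x ∈ closure {w : A | ∃ a, w = z * a} := by
  set w : A := 1 - z with hwdef
  set d : A := z - x with hddef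
  have hww : (1 - x) + (1 - y) = (2:ℝ) • w := by
    rw [two_smul]
    rw [hwdef]
    have : (1-x) + (1-y) = 1 + 1 - (x + y) := by ring
    rw [this, hz]; ring
  have hdd : (1 - x) - (1 - y) = (2:ℝ) • d := by
    rw [two_smul, hddef]
    have : (1-x) - (1-y) = y - x := by ring
    rw [this]
    have h2 : y - x = (z - x) + (z - x) ↔ y + x = z + z := by constructor <;> intro h <;> linear_combination h
    exact h2.mpr (by linear_combination hz)
  have hw1 : ‖w‖ ≤ 1 := by
    have : ‖(2:ℝ) • w‖ ≤ 2 := by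
      rw [← hww]
      calc ‖(1-x) + (1-y)‖ ≤ ‖1-x‖ + ‖1-y‖ := norm_add_le _ _
        _ ≤ 2 := by linarith
    rw [norm_smul, Real.norm_eq_abs] at this
    rw [abs_of_nonneg (by norm_num : (0:ℝ) ≤ 2)] at this
    linarith
  have hd1 : ‖d‖ ≤ 1 := by
    have : ‖(2:ℝ) • d‖ ≤ 2 := by
      rw [← hdd]
      calc ‖(1-x) - (1-y)‖ ≤ ‖1-x‖ + ‖1-y‖ := norm_sub_le _ _
        _ ≤ 2 := by linarith
    rw [norm_smul, Real.norm_eq_abs] at this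
    rw [abs_of_nonneg (by norm_num : (0:ℝ) ≤ 2)] at this
    linarith
  -- the key estimate
  have heps : ∀ k : ℕ, ‖d * w^k‖ ≤ (Nat.choose k (k/2) : ℝ) / 2^k := by
    intro k
    have hid : ((1-x) - (1-y)) * ((1-x) + (1-y))^k = ((2:ℝ)^(k+1)) • (d * w^k) := by
      rw [hww, hdd, smul_pow, smul_mul_assoc, mul_smul_comm, smul_smul, pow_succ]
      ring_nf
    have hnorm := key_norm_bound (1-x) (1-y) hx hy k
    rw [hid, norm_smul, Real.norm_eq_abs, abs_of_nonneg (by positivity)] at hnorm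
    rw [div_eq_inv_mul, ← mul_le_mul_iff_right₀ (show (0:ℝ) < 2^(k+1) by positivity)]
    calc (2:ℝ)^(k+1) * ‖d * w^k‖ ≤ 2 * (Nat.choose k (k/2) : ℝ) := hnorm
      _ = 2^(k+1) * (((2:ℝ)^k)⁻¹ * (Nat.choose k (k/2) : ℝ)) := by
          rw [pow_succ]
          field_simp
  -- the approximating sequence
  set g : ℕ → ℝ := fun k => ‖d * w^(k+1)‖ with hg
  have hgtend : Tendsto g atTop (𝓝 0) := by
    apply squeeze_zero (fun k => norm_nonneg _) (fun k => heps (k+1))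
    have := tendsto_choose_half_div.comp (tendsto_add_atTop_nat 1)
    exact this
  set aseq : ℕ → A := fun n =>
    (n:ℝ)⁻¹ • ((∑ k ∈ range n, (∑ j ∈ range (k+1), w^j)) * x) with haseq
  have hkey : ∀ n : ℕ, 1 ≤ n →
      x - z * aseq n = (n:ℝ)⁻¹ • ((∑ k ∈ range n, w^(k+1)) * x) := by
    intro n hn
    have hgeom : ∀ t : ℕ, z * (∑ j ∈ range t, w^j) = 1 - w^t := by
      intro t
      have := mul_geom_sum w t
      have hzw : z = 1 - w := by rw [hwdef]; ring
      rw [hzw]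
      calc (1 - w) * ∑ j ∈ range t, w^j = -((w - 1) * ∑ j ∈ range t, w^j) := by ring
        _ = -(w^t - 1) := by rw [this]
        _ = 1 - w^t := by ring
    have h1 : z * aseq n = (n:ℝ)⁻¹ • ((∑ k ∈ range n, (1 - w^(k+1))) * x) := by
      rw [haseq, mul_smul_comm]
      congr 1
      rw [← mul_assoc, Finset.mul_sum]
      congr 1
      exact Finset.sum_congr rfl (fun k _ => hgeom (k+1))
    rw [h1]
    have h2 : (∑ k ∈ range n, ((1:A) - w^(k+1))) = n • (1:A) - ∑ k ∈ range n, w^(k+1) := by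
      rw [Finset.sum_sub_distrib]
      congr 1
      simp
    rw [h2, sub_mul, smul_sub]
    have h3 : (n:ℝ)⁻¹ • ((n • (1:A)) * x) = x := by
      have hne : (n:ℝ) ≠ 0 := Nat.cast_ne_zero.mpr (by omega)
      rw [← Nat.cast_smul_eq_nsmul ℝ, smul_mul_assoc, smul_smul,
        inv_mul_cancel₀ hne, one_smul, one_mul]
    rw [h3]
    abel
  have hbound : ∀ n : ℕ, 1 ≤ n →
      ‖x - z * aseq n‖ ≤ (n:ℝ)⁻¹ * 2 + (n:ℝ)⁻¹ * ∑ k ∈ range n, g k := by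
    intro n hn
    rw [hkey n hn]
    have hsum : (∑ k ∈ range n, w^(k+1)) * x
        = (w - w^(n+1)) - ∑ k ∈ range n, d * w^(k+1) := by
      have hx' : x = (1 - w) - d := by rw [hwdef, hddef]; ring
      rw [Finset.sum_mul]
      have : ∀ k : ℕ, w^(k+1) * x = (w^(k+1) - w^(k+2)) - d * w^(k+1) := by
        intro k
        rw [hx']
        ring
      rw [Finset.sum_congr rfl (fun k _ => this k), Finset.sum_sub_distrib]
      congr 1
      have := Finset.sum_range_sub' (fun i => w^(i+1)) n
      simpa using this
    rw [hsum]
    rw [norm_smul, Real.norm_eq_abs, abs_of_nonneg (by positivity)]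
    have : ‖(w - w^(n+1)) - ∑ k ∈ range n, d * w^(k+1)‖ ≤ 2 + ∑ k ∈ range n, g k := by
      calc ‖(w - w^(n+1)) - ∑ k ∈ range n, d * w^(k+1)‖
          ≤ ‖w - w^(n+1)‖ + ‖∑ k ∈ range n, d * w^(k+1)‖ := norm_sub_le _ _
        _ ≤ 2 + ∑ k ∈ range n, g k := by
            gcongr
            · calc ‖w - w^(n+1)‖ ≤ ‖w‖ + ‖w^(n+1)‖ := norm_sub_le _ _
                _ ≤ 1 + 1 := add_le_add hw1 (norm_pow_le_one' w hw1 (n+1))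
                _ = 2 := by ring
            · exact norm_sum_le _ _
    calc (n:ℝ)⁻¹ * ‖(w - w^(n+1)) - ∑ k ∈ range n, d * w^(k+1)‖
        ≤ (n:ℝ)⁻¹ * (2 + ∑ k ∈ range n, g k) := by
          apply mul_le_mul_of_nonneg_left this (by positivity)
      _ = (n:ℝ)⁻¹ * 2 + (n:ℝ)⁻¹ * ∑ k ∈ range n, g k := by ring
  -- convergence
  have htend : Tendsto (fun n => z * aseq n) atTop (𝓝 x) := by
    rw [tendsto_iff_norm_sub_tendsto_zero]
    have hub : Tendsto (fun n : ℕ => (n:ℝ)⁻¹ * 2 + (n:ℝ)⁻¹ * ∑ k ∈ range n, g k)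
        atTop (𝓝 0) := by
      have t1 : Tendsto (fun n : ℕ => (n:ℝ)⁻¹ * 2) atTop (𝓝 0) := by
        have := (tendsto_inv_atTop_zero (𝕜 := ℝ)).comp tendsto_natCast_atTop_atTop
        simpa using this.mul_const (2:ℝ)
      have t2 := hgtend.cesaro
      simpa using t1.add t2
    apply squeeze_zero' (Eventually.of_forall (fun n => norm_nonneg _)) _ hub
    filter_upwards [Ici_mem_atTop 1] with n hn
    rw [norm_sub_rev]
    exact hbound n hn
  exact mem_closure_of_tendsto htend (Eventually.of_forall (fun n => ⟨aseq n, rfl⟩))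

end Aux


/-- Let `A` be a commutative unital Banach algebra and `(x k)` a
sequence in `A` with `‖1 − x k‖ ≤ 1` for all `k`.  Set `z = Σ_{k} 2^{-(k+1)} x k`.
Then `‖1 − z‖ ≤ 1` and the closure of `Σ_k (x k) A` equals the closure of `zA`. -/
theorem closure_countable_sum_ideals_eq_principal
    {A : Type*} [NormedCommRing A] [NormedAlgebra ℂ A] [NormOneClass A] [CompleteSpace A]
    (x : ℕ → A) (hx : ∀ k, ‖1 - x k‖ ≤ 1) :
    ‖1 - ∑' k : ℕ, ((1 / 2 : ℝ) ^ (k + 1)) • x k‖ ≤ 1 ∧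
    closure {w : A | ∃ (n : ℕ) (a : ℕ → A), w = ∑ k ∈ Finset.range n, x k * a k} =
      closure {w : A | ∃ a : A, w = (∑' k : ℕ, ((1 / 2 : ℝ) ^ (k + 1)) • x k) * a} := by
  have hxn : ∀ i, ‖x i‖ ≤ 2 := by
    intro i
    calc ‖x i‖ = ‖(1:A) - (1 - x i)‖ := by ring_nf
      _ ≤ ‖(1:A)‖ + ‖1 - x i‖ := norm_sub_le _ _
      _ ≤ 1 + 1 := by rw [norm_one]; exact add_le_add_right (hx i) 1
      _ = 2 := by ring
  -- summability of shifted series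
  have hsum : ∀ j : ℕ, Summable (fun k : ℕ => ((1 / 2 : ℝ) ^ (k + 1)) • x (k + j)) := by
    intro j
    apply Summable.of_norm_bounded (g := fun k => 2 * (1/2:ℝ)^(k+1))
    · apply Summable.mul_left
      exact (summable_geometric_two).comp_injective (add_left_injective 1)
    · intro k
      rw [norm_smul, Real.norm_eq_abs, abs_of_nonneg (by positivity)]
      calc (1/2:ℝ)^(k+1) * ‖x (k+j)‖ ≤ (1/2:ℝ)^(k+1) * 2 := by
            apply mul_le_mul_of_nonneg_left (hxn _) (by positivity)
        _ = 2 * (1/2:ℝ)^(k+1) := by ring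
  set Y : ℕ → A := fun j => ∑' k : ℕ, ((1 / 2 : ℝ) ^ (k + 1)) • x (k + j) with hY
  -- norm bound for each Y j
  have hone : HasSum (fun k : ℕ => ((1/2:ℝ)^(k+1)) • (1:A)) 1 := by
    have hg : HasSum (fun k : ℕ => ((1/2:ℝ)^(k+1))) 1 := by
      have := hasSum_geometric_two' 1
      apply this.congr_fun
      intro k
      rw [show (1:ℝ)/2/2^k = (1/2) * (1/2)^k by rw [one_div_pow, one_div_mul_one_div, div_div], ← pow_succ']
    simpa using hg.smul_const (1:A)
  have hnorm1 : ∀ j : ℕ, ‖1 - Y j‖ ≤ 1 := by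
    intro j
    have h2 : HasSum (fun k : ℕ => ((1/2:ℝ)^(k+1)) • x (k+j)) (Y j) := (hsum j).hasSum
    have h3 : HasSum (fun k : ℕ => ((1/2:ℝ)^(k+1)) • (1 - x (k+j))) (1 - Y j) := by
      have := hone.sub h2
      apply this.congr_fun
      intro k
      rw [smul_sub]
    have hge : HasSum (fun k : ℕ => ((1/2:ℝ)^(k+1))) 1 := by
      have := hasSum_geometric_two' 1
      apply this.congr_fun
      intro k
      rw [show (1:ℝ)/2/2^k = (1/2) * (1/2)^k by rw [one_div_pow, one_div_mul_one_div, div_div], ← pow_succ']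
    have hbd : ∀ k : ℕ, ‖((1/2:ℝ)^(k+1)) • (1 - x (k+j))‖ ≤ ((1/2:ℝ)^(k+1)) := by
      intro k
      rw [norm_smul, Real.norm_eq_abs, abs_of_nonneg (by positivity)]
      calc (1/2:ℝ)^(k+1) * ‖1 - x (k+j)‖ ≤ (1/2:ℝ)^(k+1) * 1 :=
            mul_le_mul_of_nonneg_left (hx _) (by positivity)
        _ = (1/2:ℝ)^(k+1) := by ring
    have hns : Summable (fun k : ℕ => ‖((1/2:ℝ)^(k+1)) • (1 - x (k+j))‖) := by
      apply Summable.of_nonneg_of_le (fun k => norm_nonneg _) hbd hge.summable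
    have h4 : ‖1 - Y j‖ ≤ ∑' k : ℕ, ‖((1/2:ℝ)^(k+1)) • (1 - x (k+j))‖ := by
      rw [← h3.tsum_eq]
      exact norm_tsum_le_tsum_norm hns
    calc ‖1 - Y j‖ ≤ ∑' k : ℕ, ‖((1/2:ℝ)^(k+1)) • (1 - x (k+j))‖ := h4
      _ ≤ ∑' k : ℕ, ((1/2:ℝ)^(k+1)) := Summable.tsum_le_tsum hbd hns hge.summable
      _ = 1 := hge.tsum_eq
  -- recurrence
  have hrec : ∀ j : ℕ, x j + Y (j+1) = Y j + Y j := by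
    intro j
    have hs1 : HasSum (fun k : ℕ => ((1/2:ℝ)^(k+1)) • x (k+j)) (Y j) := (hsum j).hasSum
    have hs2 : HasSum (fun k : ℕ => ((1/2:ℝ)^(k+1+1)) • x (k+1+j))
        ((1/2:ℝ) • Y (j+1)) := by
      have h' := ((hsum (j+1)).hasSum.const_smul ((1/2:ℝ)))
      apply h'.congr_fun
      intro k
      rw [smul_smul, ← pow_succ']
      rw [show k+(j+1) = k+1+j from by omega]
    have hs3 : HasSum (fun k : ℕ => ((1/2:ℝ)^(k+1)) • x (k+j))
        ((1/2:ℝ) • Y (j+1) + ((1/2:ℝ)^(0+1)) • x (0+j)) := by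
      have h'' := (hasSum_nat_add_iff (f := fun k : ℕ => ((1/2:ℝ)^(k+1)) • x (k+j)) 1).mp hs2
      simpa using h''
    have heq := hs1.unique hs3
    have h0j : (0:ℕ) + j = j := by omega
    rw [h0j, pow_one] at heq
    rw [heq]
    module
  -- closure machinery
  set z : A := Y 0 with hzdef
  set Z : Set A := {w : A | ∃ a, w = z * a} with hZ
  have hmul_mem : ∀ c ∈ closure Z, ∀ a : A, c * a ∈ closure Z := by
    intro c hc a
    apply map_mem_closure (continuous_mul_right a) hc
    rintro w ⟨b, rfl⟩
    exact ⟨b * a, by simp [mul_assoc]⟩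
  have hadd_mem : ∀ c ∈ closure Z, ∀ c' ∈ closure Z, c + c' ∈ closure Z := by
    intro c hc c' hc'
    apply map_mem_closure₂ continuous_add hc hc'
    rintro w ⟨b, rfl⟩ w' ⟨b', rfl⟩
    exact ⟨b + b', by simp [mul_add]⟩
  have hzero_mem : (0:A) ∈ closure Z := subset_closure ⟨0, by rw [mul_zero]⟩
  -- the chain
  have hYmem : ∀ j : ℕ, Y j ∈ closure Z := by
    intro j
    induction j with
    | zero => exact subset_closure ⟨1, by rw [mul_one]⟩
    | succ j ih =>
      have step : Y (j+1) ∈ closure {w : A | ∃ a, w = Y j * a} :=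
        mem_closure_principal_of_avg (Y (j+1)) (x j) (Y j) (hnorm1 (j+1)) (hx j)
          (by rw [add_comm]; exact hrec j)
      have hsub : closure {w : A | ∃ a, w = Y j * a} ⊆ closure Z := by
        apply closure_minimal _ isClosed_closure
        rintro w ⟨a, rfl⟩
        exact hmul_mem (Y j) ih a
      exact hsub step
  have hxmem : ∀ j : ℕ, x j ∈ closure Z := by
    intro j
    have step : x j ∈ closure {w : A | ∃ a, w = Y j * a} :=
      mem_closure_principal_of_avg (x j) (Y (j+1)) (Y j) (hx j) (hnorm1 (j+1)) (hrec j)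
    have hsub : closure {w : A | ∃ a, w = Y j * a} ⊆ closure Z := by
      apply closure_minimal _ isClosed_closure
      rintro w ⟨a, rfl⟩
      exact hmul_mem (Y j) (hYmem j) a
    exact hsub step
  -- conclusion
  have hz_eq : z = ∑' k : ℕ, ((1 / 2 : ℝ) ^ (k + 1)) • x k := rfl
  constructor
  · rw [← hz_eq]; exact hnorm1 0
  · rw [← hz_eq]
    apply le_antisymm
    · -- closure S ⊆ closure Z
      have hsums : ∀ (n : ℕ) (a : ℕ → A), (∑ k ∈ Finset.range n, x k * a k) ∈ closure Z := by
        intro n a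
        induction n with
        | zero => simpa using hzero_mem
        | succ n ih =>
          rw [Finset.sum_range_succ]
          exact hadd_mem _ ih _ (hmul_mem _ (hxmem n) (a n))
      apply closure_minimal _ isClosed_closure
      rintro w ⟨n, a, rfl⟩
      exact hsums n a
    · -- closure Z ⊆ closure S
      apply closure_minimal _ isClosed_closure
      rintro w ⟨a, rfl⟩
      have hsz : HasSum (fun k : ℕ => ((1/2:ℝ)^(k+1)) • (x k * a)) (z * a) := by
        have := (hsum 0).hasSum.mul_right a
        apply this.congr_fun
        intro k
        simp [smul_mul_assoc]
      apply mem_closure_of_tendsto hsz.tendsto_sum_nat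
      apply Eventually.of_forall
      intro n
      refine ⟨n, fun k => ((1/2:ℝ)^(k+1)) • a, ?_⟩
      apply Finset.sum_congr rfl
      intro k _
      simp [mul_smul_comm]
end

section
/- Let A be a nonunital Banach algebra with a contractive approximate identity (e_t). Then 0 lies in the weak* closure of the set of norm-one functionals φ on A with lim_t φ(e_t) = 1. -/
open Filter

/-- Let `A` be a nonunital Banach algebra with a contractive
approximate identity `(e t)`.  Then `0` lies in the weak* closure of the set of norm-one
functionals `φ` on `A` with `lim_t φ(e t) = 1`. -/
theorem zero_mem_weakStarClosure_states
    {A : Type*} [NonUnitalNormedRing A] [NormedSpace ℂ A]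
    [IsScalarTower ℂ A A] [SMulCommClass ℂ A A] [CompleteSpace A]
    (hnu : ¬ ∃ u : A, ∀ a : A, u * a = a ∧ a * u = a)
    {ι : Type*} [Nonempty ι] [SemilatticeSup ι]
    (e : ι → A) (hec : ∀ t, ‖e t‖ ≤ 1)
    (hl : ∀ a : A, Tendsto (fun t => e t * a) atTop (nhds a))
    (hr : ∀ a : A, Tendsto (fun t => a * e t) atTop (nhds a)) :
    (0 : WeakDual ℂ A) ∈ closure {φ : WeakDual ℂ A |
      ‖WeakDual.toStrongDual φ‖ = 1 ∧
      Tendsto (fun t => φ (e t)) atTop (nhds (1 : ℂ))} := by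
  -- Key step: for every `t` there is `s ≥ t` with `‖e s - e t‖ ≥ 1/2`.
  have key : ∀ t : ι, ∃ s : ι, t ≤ s ∧ (1/2 : ℝ) ≤ ‖e s - e t‖ := by
    intro t
    by_contra hcon
    push_neg at hcon
    apply hnu
    -- left and right multiplication by `e t`
    set T : A →L[ℂ] A := ContinuousLinearMap.mul ℂ A (e t) with hTdef
    set R : A →L[ℂ] A := (ContinuousLinearMap.mul ℂ A).flip (e t) with hRdef
    have hTa : ∀ a : A, T a = e t * a := fun a => rfl
    have hRa : ∀ a : A, R a = a * e t := fun a => rfl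
    -- `‖1 - T‖ ≤ 1/2` and `‖1 - R‖ ≤ 1/2`
    have hTb : ‖(1 : A →L[ℂ] A) - T‖ ≤ 1/2 := by
      apply ContinuousLinearMap.opNorm_le_bound _ (by norm_num)
      intro a
      have h1 : Tendsto (fun s' => ‖e s' * a - e t * a‖) atTop (nhds ‖a - e t * a‖) :=
        ((hl a).sub tendsto_const_nhds).norm
      have h2 : ((1 : A →L[ℂ] A) - T) a = a - e t * a := by
        simp [ContinuousLinearMap.sub_apply, hTa]
      rw [h2]
      refine le_of_tendsto h1 ?_
      filter_upwards [eventually_ge_atTop t] with s' hs'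
      calc ‖e s' * a - e t * a‖ = ‖(e s' - e t) * a‖ := by rw [sub_mul]
        _ ≤ ‖e s' - e t‖ * ‖a‖ := norm_mul_le _ _
        _ ≤ (1/2) * ‖a‖ :=
          mul_le_mul_of_nonneg_right (le_of_lt (hcon s' hs')) (norm_nonneg a)
    have hRb : ‖(1 : A →L[ℂ] A) - R‖ ≤ 1/2 := by
      apply ContinuousLinearMap.opNorm_le_bound _ (by norm_num)
      intro a
      have h1 : Tendsto (fun s' => ‖a * e s' - a * e t‖) atTop (nhds ‖a - a * e t‖) :=
        ((hr a).sub tendsto_const_nhds).norm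
      have h2 : ((1 : A →L[ℂ] A) - R) a = a - a * e t := by
        simp [ContinuousLinearMap.sub_apply, hRa]
      rw [h2]
      refine le_of_tendsto h1 ?_
      filter_upwards [eventually_ge_atTop t] with s' hs'
      calc ‖a * e s' - a * e t‖ = ‖a * (e s' - e t)‖ := by rw [mul_sub]
        _ ≤ ‖a‖ * ‖e s' - e t‖ := norm_mul_le _ _
        _ ≤ ‖a‖ * (1/2) := mul_le_mul_of_nonneg_left (le_of_lt (hcon s' hs')) (norm_nonneg a)
        _ = (1/2) * ‖a‖ := mul_comm _ _
    -- hence `T` and `R` are invertible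
    have hTu : IsUnit T := by
      have := (Units.oneSub ((1 : A →L[ℂ] A) - T)
        (lt_of_le_of_lt hTb (by norm_num))).isUnit
      simpa using this
    have hRu : IsUnit R := by
      have := (Units.oneSub ((1 : A →L[ℂ] A) - R)
        (lt_of_le_of_lt hRb (by norm_num))).isUnit
      simpa using this
    obtain ⟨U, hU⟩ := hTu
    obtain ⟨V, hV⟩ := hRu
    -- candidate units
    set u : A := (↑U⁻¹ : A →L[ℂ] A) (e t) with hu_def
    set v : A := (↑V⁻¹ : A →L[ℂ] A) (e t) with hv_def
    have hUinv : ∀ a : A, (↑U⁻¹ : A →L[ℂ] A) (T a) = a := by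
      intro a
      have h := congrArg (fun f : A →L[ℂ] A => f a) U.inv_mul
      simpa [hU, ContinuousLinearMap.mul_apply] using h
    have hVinv : ∀ a : A, (↑V⁻¹ : A →L[ℂ] A) (R a) = a := by
      intro a
      have h := congrArg (fun f : A →L[ℂ] A => f a) V.inv_mul
      simpa [hV, ContinuousLinearMap.mul_apply] using h
    have hTu' : e t * u = e t := by
      have h := congrArg (fun f : A →L[ℂ] A => f (e t)) U.mul_inv
      simpa [hU, ContinuousLinearMap.mul_apply, hTa] using h
    have hRv' : v * e t = e t := by
      have h := congrArg (fun f : A →L[ℂ] A => f (e t)) V.mul_inv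
      simpa [hV, ContinuousLinearMap.mul_apply, hRa] using h
    have hul : ∀ a : A, u * a = a := by
      intro a
      have h1 : T (u * a) = T a := by
        rw [hTa, hTa, ← mul_assoc, hTu']
      have h2 := congrArg (fun x => (↑U⁻¹ : A →L[ℂ] A) x) h1
      simpa [hUinv] using h2
    have hvr : ∀ a : A, a * v = a := by
      intro a
      have h1 : R (a * v) = R a := by
        rw [hRa, hRa, mul_assoc, hRv']
      have h2 := congrArg (fun x => (↑V⁻¹ : A →L[ℂ] A) x) h1
      simpa [hVinv] using h2
    have huv : u = v := by rw [← hvr u, hul v]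
    exact ⟨u, fun a => ⟨hul a, by rw [huv]; exact hvr a⟩⟩
  -- Construct the states
  choose s hs hsn using key
  set d : ι → A := fun t => e (s t) - e t with hd_def
  have hdn : ∀ t, (1/2 : ℝ) ≤ ‖d t‖ := fun t => hsn t
  have hd0 : ∀ t, d t ≠ 0 := by
    intro t h
    have h1 := hdn t
    rw [h, norm_zero] at h1
    norm_num at h1
  have hdpos : ∀ t, (0 : ℝ) < ‖d t‖ := fun t => lt_of_lt_of_le (by norm_num) (hdn t)
  -- norming functionals
  have hg : ∀ t, ∃ g : A →L[ℂ] ℂ, ‖g‖ = 1 ∧ g (d t) = ‖d t‖ :=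
    fun t => exists_dual_vector ℂ (d t) (hdpos t).ne'
  choose g hg1 hg2 using hg
  -- the states
  set φ : ι → WeakDual ℂ A := fun t =>
    ((‖d t‖⁻¹ : ℝ) : ℂ) • ((g t).comp ((ContinuousLinearMap.mul ℂ A).flip (d t))) with hφ_def
  have hφa : ∀ t (a : A), φ t a = ((‖d t‖⁻¹ : ℝ) : ℂ) * g t (a * d t) := fun t a => rfl
  -- pointwise norm bound
  have hφbound : ∀ t (a : A), ‖φ t a‖ ≤ ‖d t‖⁻¹ * ‖a * d t‖ := by
    intro t a
    rw [hφa]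
    rw [norm_mul]
    gcongr
    · rw [Complex.norm_real, Real.norm_eq_abs, abs_of_nonneg (inv_nonneg.2 (norm_nonneg _))]
    · calc ‖g t (a * d t)‖ ≤ ‖g t‖ * ‖a * d t‖ := (g t).le_opNorm _
        _ = ‖a * d t‖ := by rw [hg1 t, one_mul]
  -- each φ t evaluated along the approximate identity tends to 1
  have hφtend1 : ∀ t, Tendsto (fun s' => φ t (e s')) atTop (nhds (1 : ℂ)) := by
    intro t
    have h1 : Tendsto (fun s' => e s' * d t) atTop (nhds (d t)) := hl (d t)
    have h2 : Tendsto (fun s' => g t (e s' * d t)) atTop (nhds (g t (d t))) :=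
      ((g t).continuous.tendsto _).comp h1
    have h3 : Tendsto (fun s' => ((‖d t‖⁻¹ : ℝ) : ℂ) * g t (e s' * d t)) atTop
        (nhds (((‖d t‖⁻¹ : ℝ) : ℂ) * g t (d t))) := h2.const_mul _
    have h4 : ((‖d t‖⁻¹ : ℝ) : ℂ) * g t (d t) = 1 := by
      rw [hg2 t, ← Complex.ofReal_mul, inv_mul_cancel₀ (ne_of_gt (hdpos t))]
      norm_num
    rw [← h4]
    exact h3
  -- each φ t has norm 1
  have hφnorm : ∀ t, ‖WeakDual.toStrongDual (φ t)‖ = 1 := by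
    intro t
    apply le_antisymm
    · apply ContinuousLinearMap.opNorm_le_bound _ (by norm_num)
      intro a
      calc ‖φ t a‖ ≤ ‖d t‖⁻¹ * ‖a * d t‖ := hφbound t a
        _ ≤ ‖d t‖⁻¹ * (‖a‖ * ‖d t‖) :=
          mul_le_mul_of_nonneg_left (norm_mul_le _ _) (inv_nonneg.2 (norm_nonneg _))
        _ = ‖a‖ := by
          rw [mul_comm ‖a‖ ‖d t‖, ← mul_assoc, inv_mul_cancel₀ (ne_of_gt (hdpos t)), one_mul]
        _ ≤ 1 * ‖a‖ := le_of_eq (one_mul _).symm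
    · have h1 : Tendsto (fun s' => ‖φ t (e s')‖) atTop (nhds ‖(1 : ℂ)‖) :=
        (hφtend1 t).norm
      rw [norm_one] at h1
      refine le_of_tendsto h1 (Eventually.of_forall fun s' => ?_)
      calc ‖φ t (e s')‖ ≤ ‖WeakDual.toStrongDual (φ t)‖ * ‖e s'‖ :=
          ContinuousLinearMap.le_opNorm _ _
        _ ≤ ‖WeakDual.toStrongDual (φ t)‖ * 1 :=
          mul_le_mul_of_nonneg_left (hec s') (norm_nonneg _)
        _ = ‖WeakDual.toStrongDual (φ t)‖ := mul_one _
  -- φ t → 0 in the weak* topology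
  have hφ0 : Tendsto φ atTop (nhds (0 : WeakDual ℂ A)) := by
    rw [tendsto_iff_forall_eval_tendsto_topDualPairing]
    intro a
    have hzero : (topDualPairing ℂ A (0 : WeakDual ℂ A)) a = 0 := rfl
    rw [hzero]
    have hbd : ∀ t, ‖φ t a‖ ≤ 2 * ‖a * e (s t) - a * e t‖ := by
      intro t
      calc ‖φ t a‖ ≤ ‖d t‖⁻¹ * ‖a * d t‖ := hφbound t a
        _ ≤ 2 * ‖a * d t‖ := by
          apply mul_le_mul_of_nonneg_right _ (norm_nonneg _)
          rw [inv_le_comm₀ (hdpos t) (by norm_num)]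
          calc (2 : ℝ)⁻¹ = 1/2 := by norm_num
            _ ≤ ‖d t‖ := hdn t
        _ = 2 * ‖a * e (s t) - a * e t‖ := by rw [show a * d t = a * e (s t) - a * e t from mul_sub a _ _]
    have hstop : Tendsto s atTop atTop := tendsto_atTop_mono hs tendsto_id
    have h1 : Tendsto (fun t => a * e (s t) - a * e t) atTop (nhds 0) := by
      have := ((hr a).comp hstop).sub (hr a)
      simpa using this
    have h2 : Tendsto (fun t => 2 * ‖a * e (s t) - a * e t‖) atTop (nhds 0) := by
      have := h1.norm.const_mul (2 : ℝ)
      simpa using this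
    exact squeeze_zero_norm hbd h2
  exact mem_closure_of_tendsto hφ0
    (Eventually.of_forall fun t => ⟨hφnorm t, hφtend1 t⟩)
end
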